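/- arXiv:2312.08321 — 3 statements merged into one kernel-verified Lean document; each statement's English description precedes it below -/
import Mathlib

section
/- Let X be a separable Fréchet space, i.e., a separable, complete, metrizable topological vector space over ℂ whose topology is induced by a countable family (N_j)_{j≥1} of seminorms. Let (M_j)_{j≥1} be a sequence of positive real numbers and (k_j)_{j≥1} a sequence of positive integers. Then the set L_{(M_j),(k_j)}(X) = {T continuous linear on X : N_j(Tx) ≤ M_j · N_{k_j}(x) for every j ≥ 1 and every x ∈ X}, endowed with the topology of pointwise convergence on X, is a Polish space (separable and completely metrizable). -/
open Filter Topology Set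

noncomputable section

/-- A Polish space embedded in a metric space has Gδ range. -/
theorem aux_isGδ_range {β M : Type*} [TopologicalSpace β] [PolishSpace β] [MetricSpace M]
    {f : β → M} (hf : Topology.IsEmbedding f) : IsGδ (Set.range f) := by
  letI := TopologicalSpace.upgradeIsCompletelyMetrizable β
  set U : ℕ → Set M := fun n => {x | ∃ V : Set M, IsOpen V ∧ x ∈ V ∧
    ∀ a b : β, f a ∈ V → f b ∈ V → dist a b < 1 / (n + 1)} with hU
  have hUopen : ∀ n, IsOpen (U n) := by
    intro n
    rw [isOpen_iff_mem_nhds]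
    rintro x ⟨V, hVo, hxV, hV⟩
    exact Filter.mem_of_superset (hVo.mem_nhds hxV) fun y hy => ⟨V, hVo, hy, hV⟩
  have hsub : ∀ n, Set.range f ⊆ U n := by
    rintro n _ ⟨a, rfl⟩
    have hBopen : IsOpen (Metric.ball a (1 / (2 * (n + 1)))) := Metric.isOpen_ball
    obtain ⟨V, hVo, hVB⟩ := hf.isInducing.isOpen_iff.mp hBopen
    have hpos : (0:ℝ) < 1 / (2 * (n + 1)) := by positivity
    refine ⟨V, hVo, ?_, ?_⟩
    · have : a ∈ Metric.ball a (1 / (2 * (n + 1))) := Metric.mem_ball_self hpos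
      rw [← hVB] at this; exact this
    · intro a' b' ha' hb'
      have ha2 : a' ∈ Metric.ball a (1 / (2 * (n + 1))) := by rw [← hVB]; exact ha'
      have hb2 : b' ∈ Metric.ball a (1 / (2 * (n + 1))) := by rw [← hVB]; exact hb'
      rw [Metric.mem_ball] at ha2 hb2
      have := dist_triangle a' a b'
      have hcomm : dist a b' = dist b' a := dist_comm a b'
      have heq : 1 / (2 * ((n:ℝ) + 1)) + 1 / (2 * ((n:ℝ) + 1)) = 1 / ((n:ℝ) + 1) := by
        field_simp
        norm_num
      calc dist a' b' ≤ dist a' a + dist a b' := dist_triangle a' a b'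
        _ < 1 / (2 * (n + 1)) + 1 / (2 * (n + 1)) := by
            rw [hcomm]; exact add_lt_add ha2 hb2
        _ = 1 / (n + 1) := heq
  have hback : closure (Set.range f) ∩ ⋂ n, U n ⊆ Set.range f := by
    rintro x ⟨hxc, hxU⟩
    rw [Set.mem_iInter] at hxU
    simp only [hU, Set.mem_setOf_eq] at hxU
    choose V hVo hxV hV using hxU
    set W : ℕ → Set M := fun n => Metric.ball x (1 / (n + 1)) ∩ ⋂ i ∈ Finset.range (n + 1), V i
      with hW
    have hWopen : ∀ n, IsOpen (W n) :=
      fun n => Metric.isOpen_ball.inter (isOpen_biInter_finset fun i _ => hVo i)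
    have hxW : ∀ n, x ∈ W n := by
      intro n
      refine ⟨Metric.mem_ball_self (by positivity), ?_⟩
      exact Set.mem_iInter₂.mpr fun i _ => hxV i
    have hb : ∀ n, ∃ a : β, f a ∈ W n := by
      intro n
      obtain ⟨y, hyW, a, rfl⟩ := mem_closure_iff.mp hxc (W n) (hWopen n) (hxW n)
      exact ⟨a, hyW⟩
    choose b hbW using hb
    have hbV : ∀ {i n : ℕ}, i ≤ n → f (b n) ∈ V i := by
      intro i n hin
      have := (hbW n).2
      exact Set.mem_iInter₂.mp this i (Finset.mem_range.mpr (Nat.lt_succ_of_le hin))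
    have hcauchy : CauchySeq b := by
      rw [Metric.cauchySeq_iff']
      intro ε hε
      obtain ⟨K, hK⟩ := exists_nat_one_div_lt hε
      refine ⟨K, fun n hn => ?_⟩
      exact lt_trans (hV K (b n) (b K) (hbV hn) (hbV le_rfl)) hK
    obtain ⟨a, ha⟩ := cauchySeq_tendsto_of_complete hcauchy
    have h1 : Tendsto (fun n => f (b n)) atTop (𝓝 (f a)) := (hf.continuous.tendsto a).comp ha
    have h2 : Tendsto (fun n => f (b n)) atTop (𝓝 x) := by
      rw [Metric.tendsto_atTop]
      intro ε hε
      obtain ⟨K, hK⟩ := exists_nat_one_div_lt hε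
      refine ⟨K, fun n hn => ?_⟩
      have hball := (hbW n).1
      rw [Metric.mem_ball] at hball
      have hle : 1 / ((n:ℝ) + 1) ≤ 1 / ((K:ℝ) + 1) := by
        apply one_div_le_one_div_of_le (by positivity)
        exact_mod_cast Nat.succ_le_succ hn
      exact lt_of_lt_of_le hball (le_of_lt (lt_of_le_of_lt hle hK))
    exact ⟨a, (tendsto_nhds_unique h1 h2)⟩
  have hEq : Set.range f = closure (Set.range f) ∩ ⋂ n, U n :=
    Set.Subset.antisymm
      (Set.subset_inter subset_closure (Set.subset_iInter hsub)) hback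
  rw [hEq]
  exact (isClosed_closure.isGδ).inter (IsGδ.iInter fun n => (hUopen n).isGδ)

theorem aux_isGδ_preimage {X Y : Type*} [TopologicalSpace X] [TopologicalSpace Y]
    {f : X → Y} (hf : Continuous f) {s : Set Y} (hs : IsGδ s) : IsGδ (f ⁻¹' s) := by
  obtain ⟨T, hTo, hTc, rfl⟩ := hs
  rw [Set.preimage_sInter]
  exact IsGδ.biInter hTc fun t ht => ((hTo t ht).preimage hf).isGδ

/-- A Polish abelian topological group is complete in its group uniformity. -/
theorem aux_completeSpace {G : Type*} [AddCommGroup G] [UniformSpace G] [IsUniformAddGroup G]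
    [Filter.IsCountablyGenerated (uniformity G)] [PolishSpace G] : CompleteSpace G := by
  haveI : T0Space G := inferInstance
  letI : PseudoMetricSpace G := UniformSpace.pseudoMetricSpace G
  set s : Set (UniformSpace.Completion G) := Set.range ((↑) : G → UniformSpace.Completion G)
    with hs
  have hemb := UniformSpace.Completion.isUniformEmbedding_coe G
  have hsGδ : IsGδ s := aux_isGδ_range hemb.isEmbedding
  have hsd : Dense s := UniformSpace.Completion.denseRange_coe
  have hsurj : ∀ h : UniformSpace.Completion G, h ∈ s := by
    intro h
    let e : UniformSpace.Completion G ≃ₜ UniformSpace.Completion G :=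
      { toFun := fun y => h - y
        invFun := fun y => h - y
        left_inv := fun y => by simp
        right_inv := fun y => by simp
        continuous_toFun := continuous_const.sub continuous_id
        continuous_invFun := continuous_const.sub continuous_id }
    have htGδ : IsGδ (e ⁻¹' s) := aux_isGδ_preimage e.continuous hsGδ
    have htd : Dense (e ⁻¹' s) := by
      rw [dense_iff_closure_eq, ← e.preimage_closure, hsd.closure_eq, Set.preimage_univ]
    have hne : (s ∩ e ⁻¹' s).Nonempty := (hsd.inter_of_Gδ hsGδ htGδ htd).nonempty
    obtain ⟨y, ⟨g1, hg1⟩, g2, hg2⟩ := hne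
    refine ⟨g1 + g2, ?_⟩
    have : e y = h - y := rfl
    rw [UniformSpace.Completion.coe_add, hg1, hg2]
    show y + e y = h
    rw [this]
    abel
  rw [completeSpace_iff_isComplete_range hemb.isUniformInducing]
  have : Set.range ((↑) : G → UniformSpace.Completion G) = Set.univ :=
    Set.eq_univ_of_forall hsurj
  rw [this]
  exact complete_univ

theorem aux_conv {X : Type*} [UniformSpace X] [AddCommGroup X] [IsUniformAddGroup X]
    [PolishSpace X] [Filter.IsCountablyGenerated (nhds (0 : X))] (v : ℕ → X)
    (hv : Filter.Tendsto (fun p : ℕ × ℕ => v p.2 - v p.1) (Filter.atTop ×ˢ Filter.atTop)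
      (nhds 0)) : ∃ y, Filter.Tendsto v Filter.atTop (nhds y) := by
  haveI : Filter.IsCountablyGenerated (uniformity X) :=
    IsUniformAddGroup.uniformity_countably_generated
  haveI : CompleteSpace X := aux_completeSpace
  have hc : CauchySeq v := by
    rw [cauchySeq_iff_tendsto, ← prod_atTop_atTop_eq, uniformity_eq_comap_nhds_zero X,
      tendsto_comap_iff]
    exact hv
  exact cauchySeq_tendsto_of_complete hc

-- STATEMENT 2
/-- For a separable Fréchet space `X` (a separable, completely metrizable topological vector
space, i.e. a Polish topological vector space, whose topology is induced by a countable family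
of seminorms `(N_j)`), and for sequences `(M_j)` of positive reals and `(k_j)` of positive
integers, the space `L_{(M_j),(k_j)}(X)` of continuous linear operators `T` with
`N_j(Tx) ≤ M_j N_{k_j}(x)` for all `j` and `x`, endowed with the topology of pointwise
convergence, is a Polish space. -/
theorem stmt2 (X : Type*) [TopologicalSpace X] [AddCommGroup X] [Module ℂ X]
    [IsTopologicalAddGroup X] [ContinuousSMul ℂ X] [PolishSpace X]
    (N : ℕ → Seminorm ℂ X) (hN : WithSeminorms fun j : ℕ => N j)
    (M : ℕ → ℝ) (hM : ∀ j : ℕ, 0 < M j) (k : ℕ → ℕ) :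
    @PolishSpace {T : X →L[ℂ] X // ∀ (j : ℕ) (x : X), N j (T x) ≤ M j * N (k j) x}
      (TopologicalSpace.induced (fun T => (⇑T.1 : X → X)) Pi.topologicalSpace) := by
  -- basic instances over the ambient topology
  have hPX : PolishSpace X := inferInstance
  have h0 : Filter.IsCountablyGenerated (𝓝 (0 : X)) := inferInstance
  -- completeness, encapsulated
  have hconvseq : ∀ v : ℕ → X,
      Tendsto (fun p : ℕ × ℕ => v p.2 - v p.1) (atTop ×ˢ atTop) (𝓝 0) →
      ∃ y, Tendsto v atTop (𝓝 y) := by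
    intro v hv
    have hUAG : @IsUniformAddGroup X (IsTopologicalAddGroup.rightUniformSpace X) _ :=
      isUniformAddGroup_of_addCommGroup
    exact @aux_conv X (IsTopologicalAddGroup.rightUniformSpace X) _ hUAG (by exact hPX)
      (by exact h0) v (by exact hv)
  -- dense countable set
  obtain ⟨D, hDc, hDd⟩ := TopologicalSpace.exists_countable_dense X
  haveI := hDc.to_subtype
  set A := {T : X →L[ℂ] X // ∀ (j : ℕ) (x : X), N j (T x) ≤ M j * N (k j) x} with hA
  letI tA : TopologicalSpace A :=
    TopologicalSpace.induced (fun T : A => (⇑T.1 : X → X)) Pi.topologicalSpace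
  let Φ : A → (↥D → X) := fun T d => T.1 d
  have hNc : ∀ j, Continuous (N j) := fun j => hN.continuous_seminorm j
  -- choosing good points of D
  have hsmall : ∀ (x : X) (j : ℕ) (ε : ℝ), 0 < ε → ∃ d ∈ D, M j * N (k j) (x - d) < ε := by
    intro x j ε hε
    have hδ : 0 < ε / M j := div_pos hε (hM j)
    have hc : Continuous fun y : X => N (k j) (x - y) :=
      (hNc (k j)).comp (continuous_const.sub continuous_id)
    have hopen : IsOpen {y : X | N (k j) (x - y) < ε / M j} := isOpen_lt hc continuous_const
    have hxmem : x ∈ {y : X | N (k j) (x - y) < ε / M j} := by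
      simp only [Set.mem_setOf_eq, sub_self, map_zero]; exact hδ
    obtain ⟨d, hdD, hd⟩ := hDd.exists_mem_open hopen ⟨x, hxmem⟩
    refine ⟨d, hdD, ?_⟩
    have h2 := mul_lt_mul_of_pos_left hd (hM j)
    rwa [mul_div_cancel₀ _ (ne_of_gt (hM j))] at h2
  -- the key seminorm estimate
  have hkey : ∀ T1 T2 : X →L[ℂ] X, (∀ j x, N j (T1 x) ≤ M j * N (k j) x) →
      (∀ j x, N j (T2 x) ≤ M j * N (k j) x) → ∀ (j : ℕ) (x d : X),
      N j (T1 x - T2 x) ≤ M j * N (k j) (x - d) + N j (T1 d - T2 d) + M j * N (k j) (x - d) := by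
    intro T1 T2 h1 h2 j x d
    have hdecomp : T1 x - T2 x = T1 (x - d) + (T1 d - T2 d) + T2 (d - x) := by
      simp only [map_sub]; abel
    calc N j (T1 x - T2 x) = N j (T1 (x - d) + (T1 d - T2 d) + T2 (d - x)) := by rw [hdecomp]
      _ ≤ N j (T1 (x - d) + (T1 d - T2 d)) + N j (T2 (d - x)) := map_add_le_add _ _ _
      _ ≤ N j (T1 (x - d)) + N j (T1 d - T2 d) + N j (T2 (d - x)) :=
          add_le_add_left (map_add_le_add _ _ _) _
      _ ≤ M j * N (k j) (x - d) + N j (T1 d - T2 d) + M j * N (k j) (d - x) :=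
          add_le_add (add_le_add (h1 j (x - d)) le_rfl) (h2 j (d - x))
      _ = M j * N (k j) (x - d) + N j (T1 d - T2 d) + M j * N (k j) (x - d) := by
          rw [map_sub_rev]
  -- pointwise convergence propagates from D to X
  have hptwise : ∀ (S : ℕ → A) (T : X →L[ℂ] X), (∀ j x, N j (T x) ≤ M j * N (k j) x) →
      (∀ d ∈ D, Tendsto (fun n => (S n).1 d) atTop (𝓝 (T d))) →
      ∀ x : X, Tendsto (fun n => (S n).1 x) atTop (𝓝 (T x)) := by
    intro S T hT hD0 x
    rw [hN.tendsto_nhds]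
    intro j ε hε
    obtain ⟨d, hdD, hd⟩ := hsmall x j (ε / 3) (by linarith)
    have h0' : Tendsto (fun n => (S n).1 d - T d) atTop (𝓝 0) := by
      have h1 := (hD0 d hdD).sub_const (T d)
      rwa [sub_self] at h1
    have hconv : Tendsto (fun n => N j ((S n).1 d - T d)) atTop (𝓝 0) := by
      have h2 := ((hNc j).tendsto 0).comp h0'
      rwa [map_zero] at h2
    have hev : ∀ᶠ n in atTop, N j ((S n).1 d - T d) < ε / 3 :=
      hconv.eventually_lt_const (by linarith)
    filter_upwards [hev] with n hn
    have hb := hkey (S n).1 T (S n).2 hT j x d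
    calc N j ((S n).1 x - T x)
        ≤ M j * N (k j) (x - d) + N j ((S n).1 d - T d) + M j * N (k j) (x - d) := hb
      _ < ε / 3 + ε / 3 + ε / 3 := by exact add_lt_add (add_lt_add hd hn) hd
      _ = ε := by ring
  -- continuity of Φ
  have hΦcont : Continuous Φ :=
    continuous_pi fun d => (continuous_apply (d : X)).comp continuous_induced_dom
  -- injectivity of Φ
  have hΦinj : Function.Injective Φ := by
    intro T1 T2 h
    have heq : (T1.1 : X → X) = T2.1 :=
      Continuous.ext_on hDd T1.1.continuous T2.1.continuous fun x hx => congrFun h ⟨x, hx⟩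
    exact Subtype.ext (DFunLike.coe_injective heq)
  -- inducing
  have dir2 : TopologicalSpace.induced Φ Pi.topologicalSpace ≤ tA := by
    haveI hfc : @FirstCountableTopology A (TopologicalSpace.induced Φ Pi.topologicalSpace) :=
      TopologicalSpace.firstCountableTopology_induced A _ Φ
    haveI hseqsp : @SequentialSpace A (TopologicalSpace.induced Φ Pi.topologicalSpace) :=
      @FrechetUrysohnSpace.to_sequentialSpace A (TopologicalSpace.induced Φ Pi.topologicalSpace)
        (@FirstCountableTopology.frechetUrysohnSpace A
          (TopologicalSpace.induced Φ Pi.topologicalSpace) hfc)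
    rw [← @continuous_id_iff_le A (TopologicalSpace.induced Φ Pi.topologicalSpace) tA]
    refine @SeqContinuous.continuous A A (TopologicalSpace.induced Φ Pi.topologicalSpace) tA
      hseqsp id ?_
    intro u T h
    have hnI : @nhds A (TopologicalSpace.induced Φ Pi.topologicalSpace) T =
        Filter.comap Φ (𝓝 (Φ T)) := @nhds_induced (↥D → X) A _ Φ T
    rw [hnI] at h
    have h2 : Tendsto (Φ ∘ u) atTop (𝓝 (Φ T)) := tendsto_comap_iff.mp h
    have hD0 : ∀ d ∈ D, Tendsto (fun n => (u n).1 d) atTop (𝓝 (T.1 d)) := by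
      intro d hd
      exact (tendsto_pi_nhds.mp h2) ⟨d, hd⟩
    have hx : ∀ x : X, Tendsto (fun n => (u n).1 x) atTop (𝓝 (T.1 x)) :=
      hptwise u T.1 T.2 hD0
    have goalEq : @nhds A tA T =
        Filter.comap (fun S : A => (⇑S.1 : X → X)) (𝓝 (⇑T.1 : X → X)) :=
      @nhds_induced (X → X) A _ (fun S : A => (⇑S.1 : X → X)) T
    show Filter.Tendsto u atTop (@nhds A tA T)
    rw [goalEq, tendsto_comap_iff]
    exact tendsto_pi_nhds.mpr hx
  have hEq : tA = TopologicalSpace.induced Φ Pi.topologicalSpace :=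
    le_antisymm (continuous_iff_le_induced.mp hΦcont) dir2
  -- closed range
  have hclosed : IsClosed (Set.range Φ) := by
    apply IsSeqClosed.isClosed
    intro u g hu hg
    choose S hS using hu
    have hDconv : ∀ d : ↥D, Tendsto (fun n => (S n).1 (d : X)) atTop (𝓝 (g d)) := by
      intro d
      refine ((tendsto_pi_nhds.mp hg) d).congr fun n => ?_
      exact (congrFun (hS n) d).symm
    have hCx : ∀ x : X, ∃ y, Tendsto (fun n => (S n).1 x) atTop (𝓝 y) := by
      intro x
      apply hconvseq
      rw [hN.tendsto_nhds]
      intro j ε hε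
      obtain ⟨d, hdD, hd⟩ := hsmall x j (ε / 3) (by linarith)
      have h2 : Tendsto (fun p : ℕ × ℕ => (S p.2).1 d - (S p.1).1 d) (atTop ×ˢ atTop) (𝓝 0) := by
        have ha := (hDconv ⟨d, hdD⟩).comp (tendsto_snd : Tendsto Prod.snd ((atTop : Filter ℕ) ×ˢ (atTop : Filter ℕ)) atTop)
        have hb := (hDconv ⟨d, hdD⟩).comp (tendsto_fst : Tendsto Prod.fst ((atTop : Filter ℕ) ×ˢ (atTop : Filter ℕ)) atTop)
        have hab := ha.sub hb
        rwa [sub_self] at hab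
      have h3 : Tendsto (fun p : ℕ × ℕ => N j ((S p.2).1 d - (S p.1).1 d)) (atTop ×ˢ atTop)
          (𝓝 0) := by
        have h4 := ((hNc j).tendsto 0).comp h2
        rwa [map_zero] at h4
      filter_upwards [h3.eventually_lt_const (show (0:ℝ) < ε / 3 by linarith)] with p hp
      have hb := hkey (S p.2).1 (S p.1).1 (S p.2).2 (S p.1).2 j x d
      rw [sub_zero]
      calc N j ((S p.2).1 x - (S p.1).1 x)
          ≤ M j * N (k j) (x - d) + N j ((S p.2).1 d - (S p.1).1 d) + M j * N (k j) (x - d) := hb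
        _ < ε / 3 + ε / 3 + ε / 3 := add_lt_add (add_lt_add hd hp) hd
        _ = ε := by ring
    choose F hF using hCx
    have hadd : ∀ x y, F (x + y) = F x + F y := by
      intro x y
      refine tendsto_nhds_unique ((hF (x + y)).congr fun n => ?_) ((hF x).add (hF y))
      rw [map_add]
    have hsmul : ∀ (c : ℂ) (x : X), F (c • x) = c • F x := by
      intro c x
      refine tendsto_nhds_unique ((hF (c • x)).congr fun n => ?_) ((hF x).const_smul c)
      rw [map_smul]
    have hFbd : ∀ (j : ℕ) (x : X), N j (F x) ≤ M j * N (k j) x := fun j x =>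
      le_of_tendsto (((hNc j).tendsto (F x)).comp (hF x))
        (Filter.Eventually.of_forall fun n => (S n).2 j x)
    let flin : X →ₗ[ℂ] X :=
      { toFun := F, map_add' := hadd, map_smul' := hsmul }
    have hbdd : Seminorm.IsBounded (fun j => N j) (fun j => N j) flin := by
      intro i
      refine ⟨{k i}, ⟨M i, (hM i).le⟩, ?_⟩
      rw [Finset.sup_singleton, Seminorm.le_def]
      intro x
      simp only [Seminorm.comp_apply, Seminorm.smul_apply, NNReal.smul_def, smul_eq_mul,
        NNReal.coe_mk]
      exact hFbd i x
    have hcont : Continuous flin := Seminorm.continuous_from_bounded hN hN flin hbdd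
    refine ⟨⟨⟨flin, hcont⟩, hFbd⟩, ?_⟩
    funext d
    exact tendsto_nhds_unique (hF d) (hDconv d)
  have hCE : Topology.IsClosedEmbedding Φ := ⟨⟨⟨hEq⟩, hΦinj⟩, hclosed⟩
  exact hCE.polishSpace

end
end

section
/- Let B be a continuous linear operator on H(ℂ) such that B = T_n ∘ B ∘ T_n for some integer n ≥ 0, and let δ > 0. Then for every λ ∈ ℂ and every polynomial P of degree at most n, there exists a unique entire function f such that (B + δ·S_{n+1}) f = λ f and T_n f = P. In particular, the eigenspace ker(B + δ·S_{n+1} − λ·I) has dimension n+1. -/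
open Filter Topology

noncomputable section

set_option synthInstance.maxHeartbeats 1000000
set_option maxHeartbeats 1000000

/-- The subalgebra of entire functions inside `ℂ → ℂ`. -/
def EntireSubalgebra : Subalgebra ℂ (ℂ → ℂ) where
  carrier := {f | Differentiable ℂ f}
  mul_mem' := fun hf hg => hf.mul hg
  add_mem' := fun hf hg => hf.add hg
  algebraMap_mem' := fun c => differentiable_const c

/-- The space `H(ℂ)` of entire functions. -/
abbrev Entire : Type := ↥EntireSubalgebra

instance : CommRing Entire := inferInstance
instance : Algebra ℂ Entire := inferInstance
instance : AddCommGroup Entire := inferInstance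
instance : Module ℂ Entire := inferInstance

theorem Entire.diff (f : Entire) : Differentiable ℂ (f : ℂ → ℂ) := f.2

/-- `H(ℂ)` carries the topology of uniform convergence on compact subsets of `ℂ`,
i.e. the topology induced by the compact-open topology on `C(ℂ, ℂ)`. -/
instance Entire.topologicalSpace : TopologicalSpace Entire :=
  TopologicalSpace.induced
    (fun f : Entire => ContinuousMap.mk (f : ℂ → ℂ) (Entire.diff f).continuous)
    inferInstance

/-- The `m`-th Taylor coefficient of `f` at `0`. -/
def taylorCoeff (f : ℂ → ℂ) (m : ℕ) : ℂ := iteratedDeriv m f 0 / m.factorial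

/-- The seminorm `N_j(f) = ∑_{m ≥ 0} |a_m| j^m` where `f = ∑ a_m z^m`. -/
def entN (j : ℕ) (f : ℂ → ℂ) : ℝ := ∑' m : ℕ, ‖taylorCoeff f m‖ * (j : ℝ) ^ m

/-- The set `L_{(M_j),(k_j)}` of continuous linear operators on `H(ℂ)` with
`N_j(Tf) ≤ M_j N_{k_j}(f)` for all `j ≥ 1`. -/
def Lmk (M : ℕ → ℝ) (k : ℕ → ℕ) : Set (Entire →L[ℂ] Entire) :=
  {T | ∀ j : ℕ, 1 ≤ j → ∀ f : Entire, entN j (T f) ≤ M j * entN (k j) f}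

/-- The strong operator topology (pointwise convergence) on operators on `H(ℂ)`. -/
def sotCLM : TopologicalSpace (Entire →L[ℂ] Entire) :=
  TopologicalSpace.induced (fun T : Entire →L[ℂ] Entire => (⇑T : Entire → Entire))
    Pi.topologicalSpace

/-- The strong operator topology on `L_{(M_j),(k_j)}`. -/
def sotLmk (M : ℕ → ℝ) (k : ℕ → ℕ) : TopologicalSpace ↥(Lmk M k) :=
  TopologicalSpace.induced Subtype.val sotCLM

/-- The monomial `z ↦ z^k` as an entire function. -/
def monE (k : ℕ) : Entire := ⟨fun z => z ^ k, differentiable_pow k⟩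

/-- The exponential `z ↦ exp(β z)` as an entire function. -/
def expE (b : ℂ) : Entire :=
  ⟨fun z => Complex.exp (b * z), ((differentiable_const b).mul differentiable_id).cexp⟩

/-- The Taylor truncation operator `T_n`. -/
def trunc (n : ℕ) (f : Entire) : Entire :=
  ⟨fun z => ∑ j ∈ Finset.range (n + 1), taylorCoeff f j * z ^ j, by
    apply Differentiable.fun_sum
    exact fun j _ => (differentiable_const _).mul (differentiable_pow j)⟩

theorem Entire.diff_iteratedDeriv (f : Entire) (m : ℕ) :
    Differentiable ℂ (iteratedDeriv m (f : ℂ → ℂ)) :=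
  ContDiff.differentiable_iteratedDeriv m (f.diff.contDiff (n := (⊤ : ℕ∞)))
    (by exact_mod_cast lt_of_lt_of_le (WithTop.coe_lt_top m) le_top)

/-- The operator `S_m = (1/m!) D^m` as a map on entire functions. -/
def SEnt (m : ℕ) (f : Entire) : Entire :=
  ⟨fun z => ((m.factorial : ℂ))⁻¹ * iteratedDeriv m (f : ℂ → ℂ) z,
    (differentiable_const _).mul (f.diff_iteratedDeriv m)⟩

/-- The map `f ↦ B f + δ • S_{n+1} f`. -/
def applyA (B : Entire →L[ℂ] Entire) (δ : ℝ) (n : ℕ) (f : Entire) : Entire :=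
  B f + (δ : ℂ) • SEnt (n + 1) f

/-- `f` is a hypercyclic vector for the map `g`. -/
def HypVec (g : Entire → Entire) (f : Entire) : Prop :=
  Dense (Set.range fun m : ℕ => g^[m] f)

/-- `g` admits a hypercyclic algebra: a nonzero (non-unital) subalgebra of `H(ℂ)` all of whose
nonzero elements are hypercyclic vectors for `g`. -/
def HasHypAlgebra (g : Entire → Entire) : Prop :=
  ∃ S : NonUnitalSubalgebra ℂ Entire,
    (∃ f ∈ S, f ≠ 0) ∧ ∀ f ∈ S, f ≠ 0 → HypVec g f



open FormalMultilinearSeries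

lemma iteratedDeriv_comp' (m k : ℕ) (f : ℂ → ℂ) :
    iteratedDeriv m (iteratedDeriv k f) = iteratedDeriv (m + k) f := by
  induction k generalizing f with
  | zero => simp [iteratedDeriv_zero]
  | succ k ih =>
      rw [iteratedDeriv_succ', ih (deriv f)]
      rw [show m + (k + 1) = (m + k) + 1 from rfl, iteratedDeriv_succ']

lemma Diff.contDiffOn {f : ℂ → ℂ} (hf : Differentiable ℂ f) (k : ℕ) :
    ContDiffOn ℂ k f Set.univ :=
  ((hf.contDiff (n := (⊤ : ℕ∞))).of_le (by exact_mod_cast le_top)).contDiffOn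

lemma iteratedDeriv_add_apply' (k : ℕ) {f g : ℂ → ℂ} (hf : Differentiable ℂ f)
    (hg : Differentiable ℂ g) (z : ℂ) :
    iteratedDeriv k (fun w => f w + g w) z = iteratedDeriv k f z + iteratedDeriv k g z := by
  rw [← iteratedDerivWithin_univ, ← iteratedDerivWithin_univ, ← iteratedDerivWithin_univ]
  exact iteratedDerivWithin_add (Set.mem_univ z) uniqueDiffOn_univ
    (Diff.contDiffOn hf k z (Set.mem_univ z)) (Diff.contDiffOn hg k z (Set.mem_univ z))

lemma iteratedDeriv_cmul (k : ℕ) (c : ℂ) {f : ℂ → ℂ} (hf : Differentiable ℂ f) (z : ℂ) :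
    iteratedDeriv k (fun w => c * f w) z = c * iteratedDeriv k f z := by
  rw [← iteratedDerivWithin_univ, ← iteratedDerivWithin_univ]
  exact iteratedDerivWithin_const_mul (Set.mem_univ z) uniqueDiffOn_univ c (Diff.contDiffOn hf k z (Set.mem_univ z))

lemma coe_add (f g : Entire) : ((f + g : Entire) : ℂ → ℂ) = fun z => (f : ℂ → ℂ) z + (g : ℂ → ℂ) z := rfl
lemma coe_smul (c : ℂ) (f : Entire) : ((c • f : Entire) : ℂ → ℂ) = fun z => c * (f : ℂ → ℂ) z := rfl

lemma taylorCoeff_add (f g : Entire) (m : ℕ) :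
    taylorCoeff ((f + g : Entire) : ℂ → ℂ) m = taylorCoeff f m + taylorCoeff g m := by
  unfold taylorCoeff
  rw [coe_add, iteratedDeriv_add_apply' m f.diff g.diff, add_div]

lemma taylorCoeff_smul (c : ℂ) (f : Entire) (m : ℕ) :
    taylorCoeff ((c • f : Entire) : ℂ → ℂ) m = c * taylorCoeff f m := by
  unfold taylorCoeff
  rw [coe_smul, iteratedDeriv_cmul m c f.diff, mul_div_assoc]

lemma entire_ext_fun {f g : ℂ → ℂ} (hf : Differentiable ℂ f) (hg : Differentiable ℂ g)
    (h : ∀ m, taylorCoeff f m = taylorCoeff g m) : f = g := by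
  funext z
  rw [← Complex.taylorSeries_eq_of_entire' 0 z hf, ← Complex.taylorSeries_eq_of_entire' 0 z hg]
  apply tsum_congr
  intro m
  have h2 := h m
  unfold taylorCoeff at h2
  have hm : (m.factorial : ℂ) ≠ 0 := Nat.cast_ne_zero.mpr m.factorial_ne_zero
  field_simp at h2
  rw [h2]

lemma entire_ext {f g : Entire} (h : ∀ m, taylorCoeff (f : ℂ → ℂ) m = taylorCoeff (g : ℂ → ℂ) m) :
    f = g :=
  Subtype.ext (entire_ext_fun f.diff g.diff h)

lemma taylorCoeff_SEnt (k : ℕ) (f : Entire) (m : ℕ) :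
    taylorCoeff (SEnt k f : ℂ → ℂ) m
      = ((m + k).factorial / (m.factorial * k.factorial) : ℂ) * taylorCoeff (f : ℂ → ℂ) (m + k) := by
  unfold taylorCoeff
  have h1 : (SEnt k f : ℂ → ℂ) = fun z => ((k.factorial : ℂ))⁻¹ * iteratedDeriv k (f : ℂ → ℂ) z := rfl
  rw [h1, iteratedDeriv_cmul m _ (f.diff_iteratedDeriv k) 0]
  rw [show iteratedDeriv m (iteratedDeriv k (f : ℂ → ℂ)) 0 = iteratedDeriv (m + k) (f : ℂ → ℂ) 0
    from congrFun (iteratedDeriv_comp' m k _) 0]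
  have hm : (m.factorial : ℂ) ≠ 0 := Nat.cast_ne_zero.mpr m.factorial_ne_zero
  have hk : (k.factorial : ℂ) ≠ 0 := Nat.cast_ne_zero.mpr k.factorial_ne_zero
  have hmk : ((m + k).factorial : ℂ) ≠ 0 := Nat.cast_ne_zero.mpr (m + k).factorial_ne_zero
  field_simp
lemma ofScalars_radius_top (a : ℕ → ℂ) (A B : ℝ)
    (hab : ∀ m, ‖a m‖ ≤ A * B ^ m / m.factorial) :
    (ofScalars ℂ a).radius = ⊤ := by
  apply FormalMultilinearSeries.radius_eq_top_of_summable_norm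
  intro r
  have hs : Summable fun n : ℕ => A * (B * r) ^ n / n.factorial := by
    simpa [mul_div_assoc] using (Real.summable_pow_div_factorial (B * r)).mul_left A
  apply Summable.of_nonneg_of_le (fun n => by positivity) _ hs.abs
  intro n
  have h1 : ‖ofScalars ℂ a n‖ = ‖a n‖ := by
    rw [FormalMultilinearSeries.ofScalars_norm]
  have h2 : ‖a n‖ * (r:ℝ)^n ≤ |A * (B*r)^n / n.factorial| := by
    calc ‖a n‖ * (r:ℝ)^n ≤ (A * B^n / n.factorial) * (r:ℝ)^n := by
          exact mul_le_mul_of_nonneg_right (hab n) (by positivity)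
      _ = A * (B*r)^n / n.factorial := by ring
      _ ≤ |A * (B*r)^n / n.factorial| := le_abs_self _
  rw [h1]; exact h2

lemma ofScalars_diff (a : ℕ → ℂ) (A B : ℝ)
    (hab : ∀ m, ‖a m‖ ≤ A * B ^ m / m.factorial) :
    Differentiable ℂ ((ofScalars ℂ a).sum) := by
  intro z
  have h := (ofScalars ℂ a).hasFPowerSeriesOnBall (by
    rw [ofScalars_radius_top a A B hab]; exact ENNReal.zero_lt_top)
  exact (h.analyticAt_of_mem (by
    rw [ofScalars_radius_top a A B hab]; simp [edist_lt_top])).differentiableAt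

lemma ofScalars_iteratedDeriv (a : ℕ → ℂ) (A B : ℝ)
    (hab : ∀ m, ‖a m‖ ≤ A * B ^ m / m.factorial) (m : ℕ) :
    iteratedDeriv m ((ofScalars ℂ a).sum) 0 = m.factorial * a m := by
  have h := (ofScalars ℂ a).hasFPowerSeriesOnBall (by
    rw [ofScalars_radius_top a A B hab]; exact ENNReal.zero_lt_top)
  have h2 := h.factorial_smul (y := (1:ℂ)) m
  rw [ofScalars_apply_eq] at h2
  rw [iteratedDeriv_eq_iteratedFDeriv, ← h2]
  simp [mul_comm]

lemma ofScalars_taylorCoeff (a : ℕ → ℂ) (A B : ℝ)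
    (hab : ∀ m, ‖a m‖ ≤ A * B ^ m / m.factorial) (m : ℕ) :
    taylorCoeff ((ofScalars ℂ a).sum) m = a m := by
  unfold taylorCoeff
  rw [ofScalars_iteratedDeriv a A B hab m]
  have hm : (m.factorial : ℂ) ≠ 0 := Nat.cast_ne_zero.mpr m.factorial_ne_zero
  field_simp

lemma ofScalars_sum_eq_finsum (a : ℕ → ℂ) (N : ℕ) (h : ∀ m, N ≤ m → a m = 0) (z : ℂ) :
    (ofScalars ℂ a).sum z = ∑ j ∈ Finset.range N, a j * z ^ j := by
  have h1 : (ofScalars ℂ a).sum z = ∑' n : ℕ, a n • z ^ n :=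
    tsum_congr fun n => ofScalars_apply_eq a z n
  rw [h1, tsum_eq_sum (s := Finset.range N) (fun b hb => by
    rw [h b (by simpa using hb)]; simp)]
  simp [smul_eq_mul]

lemma bound_of_eventually_zero (a : ℕ → ℂ) (N : ℕ) (h : ∀ m, N < m → a m = 0) :
    ∀ m, ‖a m‖ ≤
      (∑ j ∈ Finset.range (N + 1), ‖a j‖ * j.factorial) * (1:ℝ) ^ m / m.factorial := by
  intro m
  set A := ∑ j ∈ Finset.range (N + 1), ‖a j‖ * j.factorial with hA
  have hA0 : 0 ≤ A := Finset.sum_nonneg fun j _ => by positivity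
  rw [one_pow, mul_one]
  by_cases hm : m ≤ N
  · have hterm : ‖a m‖ * m.factorial ≤ A :=
      Finset.single_le_sum (f := fun j => ‖a j‖ * (j.factorial : ℝ))
        (fun j _ => by positivity) (Finset.mem_range.mpr (by omega))
    rw [le_div_iff₀ (by positivity : (0:ℝ) < (m.factorial : ℝ))]
    exact hterm
  · rw [h m (by omega)]
    simp only [norm_zero]
    positivity

lemma trunc_coe (n : ℕ) (f : Entire) : ((trunc n f : Entire) : ℂ → ℂ)
    = fun z => ∑ j ∈ Finset.range (n + 1), taylorCoeff (f : ℂ → ℂ) j * z ^ j := rfl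

lemma taylorCoeff_of_finsum (c : ℕ → ℂ) (N : ℕ) (m : ℕ) :
    taylorCoeff (fun z => ∑ j ∈ Finset.range N, c j * z ^ j) m
      = if m < N then c m else 0 := by
  set a : ℕ → ℂ := fun j => if j < N then c j else 0 with ha
  have hz : ∀ m, N ≤ m → a m = 0 := fun m hm => by simp [ha, Nat.not_lt.mpr hm]
  have hb := bound_of_eventually_zero a N (fun m hm => hz m (by omega))
  have hsum : (fun z => ∑ j ∈ Finset.range N, c j * z ^ j) = (ofScalars ℂ a).sum := by
    funext z
    rw [ofScalars_sum_eq_finsum a N hz z]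
    exact (Finset.sum_congr rfl fun j hj => by
      simp [ha, Finset.mem_range.mp hj]).symm
  rw [hsum, ofScalars_taylorCoeff a _ 1 hb m]

def solCoeff (n : ℕ) (dc lam : ℂ) (Pc Qc : ℕ → ℂ) : ℕ → ℂ
  | m =>
    if h : m ≤ n then Pc m
    else
      (lam * solCoeff n dc lam Pc Qc (m - (n + 1)) - Qc (m - (n + 1)))
        * (((m - (n + 1)).factorial : ℂ) * ((n + 1).factorial : ℂ)) / (dc * (m.factorial : ℂ))
  decreasing_by omega

lemma solCoeff_le {n : ℕ} {dc lam : ℂ} {Pc Qc : ℕ → ℂ} {m : ℕ} (h : m ≤ n) :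
    solCoeff n dc lam Pc Qc m = Pc m := by
  rw [solCoeff]; simp [h]

lemma solCoeff_gt {n : ℕ} {dc lam : ℂ} {Pc Qc : ℕ → ℂ} {m : ℕ} (h : ¬ m ≤ n) :
    solCoeff n dc lam Pc Qc m =
      (lam * solCoeff n dc lam Pc Qc (m - (n + 1)) - Qc (m - (n + 1)))
        * (((m - (n + 1)).factorial : ℂ) * ((n + 1).factorial : ℂ)) / (dc * (m.factorial : ℂ)) := by
  conv_lhs => rw [solCoeff]
  simp [h]

lemma solCoeff_rec {n : ℕ} {dc lam : ℂ} {Pc Qc : ℕ → ℂ} (hd : dc ≠ 0) (m : ℕ) :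
    dc * (((m + n + 1).factorial : ℂ) / ((m.factorial : ℂ) * ((n + 1).factorial : ℂ)))
        * solCoeff n dc lam Pc Qc (m + n + 1)
      = lam * solCoeff n dc lam Pc Qc m - Qc m := by
  have h1 : ¬ m + n + 1 ≤ n := by omega
  have h2 : m + n + 1 - (n + 1) = m := by omega
  rw [solCoeff_gt h1, h2]
  have hm : ((m.factorial : ℂ)) ≠ 0 := Nat.cast_ne_zero.mpr m.factorial_ne_zero
  have hn1 : (((n + 1).factorial : ℂ)) ≠ 0 := Nat.cast_ne_zero.mpr (n + 1).factorial_ne_zero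
  have hmn : (((m + n + 1).factorial : ℂ)) ≠ 0 := Nat.cast_ne_zero.mpr (m + n + 1).factorial_ne_zero
  field_simp

lemma solCoeff_bound {n : ℕ} {dc lam : ℂ} {Pc Qc : ℕ → ℂ} (hd : dc ≠ 0)
    (hQ : ∀ m, n < m → Qc m = 0) :
    ∃ A B : ℝ, ∀ m, ‖solCoeff n dc lam Pc Qc m‖ ≤ A * B ^ m / m.factorial := by
  set s := solCoeff n dc lam Pc Qc with hs
  set ad := ‖dc‖ with had
  have had0 : 0 < ad := by
    simpa [had] using (norm_pos_iff.mpr hd)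
  set CP := ∑ j ∈ Finset.range (n + 1), ‖Pc j‖ * (j.factorial : ℝ) with hCP
  set CQ := ∑ j ∈ Finset.range (n + 1), ‖Qc j‖ * (j.factorial : ℝ) with hCQ
  have hCP0 : 0 ≤ CP := Finset.sum_nonneg fun j _ => by positivity
  have hCQ0 : 0 ≤ CQ := Finset.sum_nonneg fun j _ => by positivity
  set x : ℝ := ‖lam‖ * ((n + 1).factorial : ℝ) / ad with hx
  set y : ℝ := CQ * ((n + 1).factorial : ℝ) / ad with hy
  have hx0 : 0 ≤ x := by positivity
  have hy0 : 0 ≤ y := by positivity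
  set B : ℝ := 1 + 2 * x with hB
  set A : ℝ := CP + 2 * y + 1 with hA
  clear_value s ad CP CQ x y B A
  have hB1 : 1 ≤ B := by simp [hB]; linarith
  have hA0 : 0 < A := by simp [hA]; linarith
  have hQbound : ∀ k, ‖Qc k‖ * (k.factorial : ℝ) ≤ CQ := by
    intro k
    by_cases hk : k ≤ n
    · rw [hCQ]
      exact Finset.single_le_sum (f := fun j => ‖Qc j‖ * (j.factorial : ℝ))
        (fun j _ => by positivity) (Finset.mem_range.mpr (by omega))
    · rw [hQ k (by omega)]; simp [hCQ0]
  refine ⟨A, B, ?_⟩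
  have key : ∀ m, ‖s m‖ * (m.factorial : ℝ) ≤ A * B ^ m := by
    intro m
    induction m using Nat.strong_induction_on with
    | _ m ih =>
      have hBm1 : (1:ℝ) ≤ B ^ m := one_le_pow₀ hB1
      by_cases hm : m ≤ n
      · rw [hs, solCoeff_le hm]
        have : ‖Pc m‖ * (m.factorial : ℝ) ≤ CP := by
          rw [hCP]
          exact Finset.single_le_sum (f := fun j => ‖Pc j‖ * (j.factorial : ℝ))
            (fun j _ => by positivity) (Finset.mem_range.mpr (by omega))
        calc ‖Pc m‖ * (m.factorial : ℝ) ≤ CP := this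
          _ ≤ A * 1 := by simp [hA]; linarith
          _ ≤ A * B ^ m := by
              exact mul_le_mul_of_nonneg_left hBm1 hA0.le
      · -- m > n
        set k := m - (n + 1) with hk
        have hkm : k < m := by omega
        have hmk : m = k + (n + 1) := by omega
        have hrec : s m = (lam * s k - Qc k)
            * (((k.factorial : ℂ)) * (((n + 1).factorial : ℂ))) / (dc * (m.factorial : ℂ)) := by
          rw [hs, solCoeff_gt hm, ← hk]
        have habs : ‖s m‖ * (m.factorial : ℝ) =
            ‖lam * s k - Qc k‖ * ((k.factorial : ℝ) * (((n + 1).factorial : ℝ))) / ad := by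
          rw [hrec]
          rw [norm_div, norm_mul, norm_mul, norm_mul]
          simp only [Complex.norm_natCast, ← had]
          have hmf : (0:ℝ) < (m.factorial : ℝ) := by positivity
          field_simp
        have htri : ‖lam * s k - Qc k‖ ≤
            ‖lam‖ * ‖s k‖ + ‖Qc k‖ := by
          calc ‖lam * s k - Qc k‖
              ≤ ‖lam * s k‖ + ‖Qc k‖ := norm_sub_le _ _
            _ = ‖lam‖ * ‖s k‖ + ‖Qc k‖ := by rw [norm_mul]
        have hnum : ‖lam * s k - Qc k‖ * ((k.factorial : ℝ) * (((n + 1).factorial : ℝ)))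
            ≤ (‖lam‖ * (A * B ^ k) + CQ) * (((n + 1).factorial : ℝ)) := by
          have h1 := ih k hkm
          have h2 := hQbound k
          have h3 : 0 ≤ ‖lam‖ := by positivity
          have h4 : 0 ≤ (((n + 1).factorial : ℝ)) := by positivity
          have h5 : 0 ≤ (k.factorial : ℝ) := by positivity
          have h6 : ‖lam * s k - Qc k‖ * (k.factorial : ℝ)
              ≤ ‖lam‖ * (A * B ^ k) + CQ := by
            calc ‖lam * s k - Qc k‖ * (k.factorial : ℝ)
                ≤ (‖lam‖ * ‖s k‖ + ‖Qc k‖) * (k.factorial : ℝ) :=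
                  mul_le_mul_of_nonneg_right htri h5
              _ = ‖lam‖ * (‖s k‖ * (k.factorial : ℝ))
                  + ‖Qc k‖ * (k.factorial : ℝ) := by ring
              _ ≤ ‖lam‖ * (A * B ^ k) + CQ := by nlinarith
          calc ‖lam * s k - Qc k‖ * ((k.factorial : ℝ) * (((n + 1).factorial : ℝ)))
              = (‖lam * s k - Qc k‖ * (k.factorial : ℝ)) * (((n + 1).factorial : ℝ)) := by
                ring
            _ ≤ (‖lam‖ * (A * B ^ k) + CQ) * (((n + 1).factorial : ℝ)) :=
                mul_le_mul_of_nonneg_right h6 h4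
        have hstep : ‖s m‖ * (m.factorial : ℝ) ≤
            (‖lam‖ * (A * B ^ k) + CQ) * (((n + 1).factorial : ℝ)) / ad := by
          rw [habs]
          gcongr
        -- now the arithmetic
        have hBpow : B ≤ B ^ (n + 1) := by
          calc B = B ^ 1 := (pow_one B).symm
            _ ≤ B ^ (n + 1) := pow_le_pow_right₀ hB1 (by omega)
        have hBsplit : B ^ m = B ^ k * B ^ (n + 1) := by
          rw [hmk, pow_add]
        have hBk1 : (1:ℝ) ≤ B ^ k := one_le_pow₀ hB1
        have hexp : (‖lam‖ * (A * B ^ k) + CQ) * (((n + 1).factorial : ℝ)) / ad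
            = x * A * B ^ k + y := by
          rw [hx, hy]
          field_simp
        rw [hexp] at hstep
        refine hstep.trans ?_
        have h1 : x * A * B ^ k ≤ A * B ^ m / 2 := by
          have hxB : x ≤ B ^ (n+1) / 2 := by
            have h2x : 2 * x = B - 1 := by rw [hB]; ring
            nlinarith
          have hABk : (0:ℝ) ≤ A * B ^ k := by positivity
          calc x * A * B ^ k = (A * B ^ k) * x := by ring
            _ ≤ (A * B ^ k) * (B ^ (n+1) / 2) := mul_le_mul_of_nonneg_left hxB hABk
            _ = A * (B ^ k * B ^ (n+1)) / 2 := by ring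
            _ = A * B ^ m / 2 := by rw [← hBsplit]
        have h2 : y ≤ A * B ^ m / 2 := by
          have hyA : 2 * y ≤ A := by simp [hA]; linarith
          nlinarith
        linarith
  intro m
  rw [le_div_iff₀ (by positivity : (0:ℝ) < (m.factorial : ℝ))]
  exact key m

lemma taylorCoeff_trunc (n : ℕ) (f : Entire) (m : ℕ) :
    taylorCoeff ((trunc n f : Entire) : ℂ → ℂ) m
      = if m ≤ n then taylorCoeff (f : ℂ → ℂ) m else 0 := by
  rw [trunc_coe, taylorCoeff_of_finsum (fun j => taylorCoeff (f : ℂ → ℂ) j) (n + 1) m]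
  simp [Nat.lt_succ_iff]

lemma taylorCoeff_poly (P : Polynomial ℂ) (m : ℕ) :
    taylorCoeff (fun z => P.eval z) m = P.coeff m := by
  have h1 : (fun z : ℂ => P.eval z)
      = fun z => ∑ j ∈ Finset.range (P.natDegree + 1), P.coeff j * z ^ j := by
    funext z
    exact Polynomial.eval_eq_sum_range z
  rw [h1, taylorCoeff_of_finsum]
  by_cases hm : m < P.natDegree + 1
  · simp [hm]
  · rw [if_neg hm, Polynomial.coeff_eq_zero_of_natDegree_lt (by omega)]

lemma taylorCoeff_zero_fun (m : ℕ) : taylorCoeff ((0 : Entire) : ℂ → ℂ) m = 0 := by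
  have h1 : ((0 : Entire) : ℂ → ℂ) = fun z => ∑ j ∈ Finset.range 0, (0:ℂ) * z ^ j := by
    funext z; simp only [Finset.range_zero, Finset.sum_empty]; rfl
  rw [h1, taylorCoeff_of_finsum]
  simp

lemma SEnt_add (k : ℕ) (f g : Entire) : SEnt k (f + g) = SEnt k f + SEnt k g := by
  apply Subtype.ext
  funext z
  show ((k.factorial : ℂ))⁻¹ * iteratedDeriv k ((f + g : Entire) : ℂ → ℂ) z
    = ((k.factorial : ℂ))⁻¹ * iteratedDeriv k (f : ℂ → ℂ) z
      + ((k.factorial : ℂ))⁻¹ * iteratedDeriv k (g : ℂ → ℂ) z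
  rw [coe_add, iteratedDeriv_add_apply' k f.diff g.diff]
  ring

lemma SEnt_smul (k : ℕ) (c : ℂ) (f : Entire) : SEnt k (c • f) = c • SEnt k f := by
  apply Subtype.ext
  funext z
  show ((k.factorial : ℂ))⁻¹ * iteratedDeriv k ((c • f : Entire) : ℂ → ℂ) z
    = c * (((k.factorial : ℂ))⁻¹ * iteratedDeriv k (f : ℂ → ℂ) z)
  rw [coe_smul, iteratedDeriv_cmul k c f.diff]
  ring

/-- `applyA` as a linear map, shifted by `lam`. -/
def applyALM (B : Entire →L[ℂ] Entire) (δ : ℝ) (n : ℕ) (lam : ℂ) : Entire →ₗ[ℂ] Entire where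
  toFun f := applyA B δ n f - lam • f
  map_add' f g := by
    show applyA B δ n (f + g) - lam • (f + g) = _
    unfold applyA
    rw [map_add, SEnt_add, smul_add, smul_add]
    abel
  map_smul' c f := by
    show applyA B δ n (c • f) - lam • (c • f) = c • (applyA B δ n f - lam • f)
    unfold applyA
    rw [map_smul, SEnt_smul, smul_comm ((δ:ℂ)) c, smul_comm lam c, ← smul_add, ← smul_sub]

lemma applyA_coeff (B : Entire →L[ℂ] Entire) (n : ℕ) (δ : ℝ) (f : Entire) (k : ℕ) :
    taylorCoeff ((applyA B δ n f : Entire) : ℂ → ℂ) k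
      = taylorCoeff ((B f : Entire) : ℂ → ℂ) k
        + (δ : ℂ) * (((k + (n + 1)).factorial / (k.factorial * (n + 1).factorial)) : ℂ)
            * taylorCoeff (f : ℂ → ℂ) (k + (n + 1)) := by
  unfold applyA
  rw [taylorCoeff_add, taylorCoeff_smul, taylorCoeff_SEnt]
  ring

lemma factC_ne_zero (k n : ℕ) (δ : ℝ) (hδ : 0 < δ) :
    (δ : ℂ) * (((k + (n + 1)).factorial / (k.factorial * (n + 1).factorial)) : ℂ) ≠ 0 := by
  apply mul_ne_zero
  · exact_mod_cast hδ.ne'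
  · apply div_ne_zero
    · exact_mod_cast (k + (n + 1)).factorial_ne_zero
    · exact mul_ne_zero (by exact_mod_cast k.factorial_ne_zero)
        (by exact_mod_cast (n + 1).factorial_ne_zero)

lemma eig_unique (B : Entire →L[ℂ] Entire) (n : ℕ)
    (hB : ∀ f : Entire, B f = trunc n (B (trunc n f))) (δ : ℝ) (hδ : 0 < δ) (lam : ℂ)
    (f g : Entire) (hf : applyA B δ n f = lam • f) (hg : applyA B δ n g = lam • g)
    (htr : trunc n f = trunc n g) : f = g := by
  apply entire_ext
  intro m
  induction m using Nat.strong_induction_on with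
  | _ m ih =>
    by_cases hm : m ≤ n
    · have h1 := congrArg (fun h : Entire => taylorCoeff (h : ℂ → ℂ) m) htr
      simpa only [taylorCoeff_trunc, if_pos hm] using h1
    · set k := m - (n + 1) with hk
      have hmk : m = k + (n + 1) := by omega
      have hfk : taylorCoeff ((applyA B δ n f : Entire) : ℂ → ℂ) k
          = taylorCoeff ((lam • f : Entire) : ℂ → ℂ) k := by rw [hf]
      have hgk : taylorCoeff ((applyA B δ n g : Entire) : ℂ → ℂ) k
          = taylorCoeff ((lam • g : Entire) : ℂ → ℂ) k := by rw [hg]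
      rw [applyA_coeff, taylorCoeff_smul] at hfk hgk
      have hBfg : taylorCoeff ((B f : Entire) : ℂ → ℂ) k
          = taylorCoeff ((B g : Entire) : ℂ → ℂ) k := by
        rw [hB f, hB g, htr]
      have hik : taylorCoeff (f : ℂ → ℂ) k = taylorCoeff (g : ℂ → ℂ) k := ih k (by omega)
      have h5 : (δ : ℂ) * (((k + (n + 1)).factorial / (k.factorial * (n + 1).factorial)) : ℂ)
            * taylorCoeff (f : ℂ → ℂ) (k + (n + 1))
          = (δ : ℂ) * (((k + (n + 1)).factorial / (k.factorial * (n + 1).factorial)) : ℂ)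
            * taylorCoeff (g : ℂ → ℂ) (k + (n + 1)) := by
        linear_combination hfk - hgk - hBfg + lam * hik
      rw [hmk]
      exact mul_left_cancel₀ (factC_ne_zero k n δ hδ) h5

lemma eig_exists (B : Entire →L[ℂ] Entire) (n : ℕ)
    (hB : ∀ f : Entire, B f = trunc n (B (trunc n f))) (δ : ℝ) (hδ : 0 < δ) (lam : ℂ)
    (P : Polynomial ℂ) (hP : P.degree ≤ n) :
    ∃ f : Entire, applyA B δ n f = lam • f ∧
      trunc n f = ⟨fun z => Polynomial.eval z P, P.differentiable⟩ := by
  set Pe : Entire := ⟨fun z => Polynomial.eval z P, P.differentiable⟩ with hPe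
  set Qc : ℕ → ℂ := fun m => taylorCoeff ((trunc n (B Pe) : Entire) : ℂ → ℂ) m with hQdef
  have hQc : ∀ m, n < m → Qc m = 0 := by
    intro m hm
    show taylorCoeff ((trunc n (B Pe) : Entire) : ℂ → ℂ) m = 0
    rw [taylorCoeff_trunc, if_neg (by omega)]
  have hdc : ((δ : ℝ) : ℂ) ≠ 0 := by exact_mod_cast hδ.ne'
  set s : ℕ → ℂ := solCoeff n (δ : ℂ) lam P.coeff Qc with hsdef
  obtain ⟨A, Bb, hs⟩ := solCoeff_bound (n := n) (lam := lam) (Pc := P.coeff) hdc hQc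
  rw [← hsdef] at hs
  set F : Entire := ⟨(FormalMultilinearSeries.ofScalars ℂ s).sum, ofScalars_diff s A Bb hs⟩
    with hFdef
  have hFc : ∀ m, taylorCoeff (F : ℂ → ℂ) m = s m := fun m => ofScalars_taylorCoeff s A Bb hs m
  have hnat : P.natDegree ≤ n := Polynomial.natDegree_le_iff_degree_le.mpr hP
  have hPec : ∀ m, taylorCoeff (Pe : ℂ → ℂ) m = P.coeff m := by
    intro m
    show taylorCoeff (fun z => P.eval z) m = P.coeff m
    exact taylorCoeff_poly P m
  have htr : trunc n F = Pe := by
    apply entire_ext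
    intro m
    rw [taylorCoeff_trunc, hPec]
    by_cases hm : m ≤ n
    · rw [if_pos hm, hFc, hsdef, solCoeff_le hm]
    · rw [if_neg hm, Polynomial.coeff_eq_zero_of_natDegree_lt (by omega)]
  refine ⟨F, ?_, htr⟩
  apply entire_ext
  intro m
  rw [applyA_coeff, taylorCoeff_smul, hFc, hFc]
  have hBF : B F = trunc n (B Pe) := by rw [hB F, htr]
  rw [hBF]
  have hQm : taylorCoeff ((trunc n (B Pe) : Entire) : ℂ → ℂ) m = Qc m := rfl
  rw [hQm]
  have hadd : m + (n + 1) = m + n + 1 := by omega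
  rw [hadd]
  have hrec := solCoeff_rec (n := n) (dc := (δ : ℂ)) (lam := lam) (Pc := P.coeff) (Qc := Qc) hdc m
  rw [← hsdef] at hrec
  linear_combination hrec

theorem stmt11 (B : Entire →L[ℂ] Entire) (n : ℕ)
    (hB : ∀ f : Entire, B f = trunc n (B (trunc n f))) (δ : ℝ) (hδ : 0 < δ)
    (lam : ℂ) (P : Polynomial ℂ) (hP : P.degree ≤ n) :
    (∃! f : Entire, applyA B δ n f = lam • f ∧
        trunc n f = ⟨fun z => Polynomial.eval z P, P.differentiable⟩) ∧
      ∃ W : Submodule ℂ Entire,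
        (W : Set Entire) = {f : Entire | applyA B δ n f = lam • f} ∧
        Module.finrank ℂ ↥W = n + 1 := by
  constructor
  · obtain ⟨F, hF1, hF2⟩ := eig_exists B n hB δ hδ lam P hP
    refine ⟨F, ⟨hF1, hF2⟩, ?_⟩
    rintro g ⟨hg1, hg2⟩
    exact eig_unique B n hB δ hδ lam g F hg1 hF1 (by rw [hF2, hg2])
  · refine ⟨LinearMap.ker (applyALM B δ n lam), ?_, ?_⟩
    · ext f
      have : applyALM B δ n lam f = applyA B δ n f - lam • f := rfl
      simp only [SetLike.mem_coe, LinearMap.mem_ker, this, sub_eq_zero, Set.mem_setOf_eq]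
    · set W := LinearMap.ker (applyALM B δ n lam) with hW
      have hmemW : ∀ f : Entire, f ∈ W ↔ applyA B δ n f = lam • f := by
        intro f
        rw [hW, LinearMap.mem_ker]
        have : applyALM B δ n lam f = applyA B δ n f - lam • f := rfl
        rw [this, sub_eq_zero]
      let e : ↥W →ₗ[ℂ] (Fin (n + 1) → ℂ) :=
        { toFun := fun f i => taylorCoeff ((f : Entire) : ℂ → ℂ) (i : ℕ)
          map_add' := fun f g => by
            funext i
            exact taylorCoeff_add (f : Entire) (g : Entire) (i : ℕ)
          map_smul' := fun c f => by
            funext i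
            exact taylorCoeff_smul c (f : Entire) (i : ℕ) }
      have hinj : Function.Injective e := by
        rw [← LinearMap.ker_eq_bot]
        rw [LinearMap.ker_eq_bot']
        intro f hf0
        have hfW : applyA B δ n (f : Entire) = lam • (f : Entire) := (hmemW _).mp f.2
        have h0W : applyA B δ n (0 : Entire) = lam • (0 : Entire) :=
          (hmemW _).mp (Submodule.zero_mem W)
        have htr0 : trunc n (f : Entire) = trunc n (0 : Entire) := by
          apply entire_ext
          intro m
          rw [taylorCoeff_trunc, taylorCoeff_trunc, taylorCoeff_zero_fun]
          by_cases hm : m ≤ n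
          · rw [if_pos hm, if_pos hm]
            have := congrFun hf0 ⟨m, by omega⟩
            simpa [e] using this
          · rw [if_neg hm, if_neg hm]
        have := eig_unique B n hB δ hδ lam (f : Entire) 0 hfW h0W htr0
        exact Subtype.ext this
      have hsurj : Function.Surjective e := by
        intro v
        set v' : ℕ → ℂ := fun j => if h : j < n + 1 then v ⟨j, h⟩ else 0 with hv'
        set P' : Polynomial ℂ :=
          ∑ i ∈ Finset.range (n + 1), Polynomial.C (v' i) * Polynomial.X ^ i with hP'
        have hP'c : ∀ j, P'.coeff j = v' j := by
          intro j
          rw [hP', Polynomial.finset_sum_coeff]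
          by_cases hj : j < n + 1
          · rw [Finset.sum_eq_single j]
            · simp [Polynomial.coeff_C_mul, Polynomial.coeff_X_pow]
            · intro i _ hij
              simp [Polynomial.coeff_C_mul, Polynomial.coeff_X_pow, Ne.symm hij]
            · intro hj2
              exact absurd (Finset.mem_range.mpr hj) hj2
          · rw [Finset.sum_eq_zero, hv']
            · simp [hj]
            · intro i hi
              have : i ≠ j := by
                intro h
                exact hj (h ▸ Finset.mem_range.mp hi)
              simp [Polynomial.coeff_C_mul, Polynomial.coeff_X_pow, Ne.symm this]
        have hP'deg : P'.degree ≤ n := by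
          rw [hP']
          refine le_trans (Polynomial.degree_sum_le _ _) ?_
          apply Finset.sup_le
          intro i hi
          refine le_trans (Polynomial.degree_C_mul_X_pow_le _ _) ?_
          have hin : i ≤ n := Nat.lt_succ_iff.mp (Finset.mem_range.mp hi)
          exact_mod_cast hin
        obtain ⟨f, hf1, hf2⟩ := eig_exists B n hB δ hδ lam P' hP'deg
        refine ⟨⟨f, (hmemW f).mpr hf1⟩, ?_⟩
        funext i
        show taylorCoeff (f : ℂ → ℂ) (i : ℕ) = v i
        have h1 := congrArg (fun h : Entire => taylorCoeff (h : ℂ → ℂ) (i : ℕ)) hf2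
        simp only [taylorCoeff_trunc, if_pos (by omega : (i : ℕ) ≤ n)] at h1
        have h2 : taylorCoeff (fun z => Polynomial.eval z P') (i : ℕ) = P'.coeff i :=
          taylorCoeff_poly P' i
        rw [show taylorCoeff ((⟨fun z => Polynomial.eval z P', P'.differentiable⟩ : Entire) : ℂ → ℂ)
            (i : ℕ) = taylorCoeff (fun z => Polynomial.eval z P') (i : ℕ) from rfl, h2, hP'c] at h1
        rw [h1, hv']
        simp [i.isLt]
      have := LinearEquiv.finrank_eq (LinearEquiv.ofBijective e ⟨hinj, hsurj⟩)
      rw [this, Module.finrank_fin_fun]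

end
end

section
/- Let n ≥ 0 and m ≥ 1 be integers, let x_0 > 0, and set φ(z) = (z/x_0)^{n+1} for z ∈ ℂ. For η > 0 and ε > 0 define 𝒜 = D(0,η) (the open disk of center 0 and radius η), ζ_j = x_0(1+ε)e^{2πi j/(n+1)} for j = 0, …, n, and ℬ = ⋃_{j=0}^n {ζ_j(1+it) : t ∈ [−η, η]}. Then there exist η > 0 and ε > 0 such that: (1) for every j = 1, …, m, every d = 0, …, j with d ≠ m, all ξ̃_1, …, ξ̃_{j−d} ∈ 𝒜 and all ξ_1, …, ξ_d ∈ ℬ, one has |φ(ξ̃_1 + ⋯ + ξ̃_{j−d} + (ξ_1 + ⋯ + ξ_d)/m)| < 1; and (2) for every l = 1, …, m and all ξ_1, …, ξ_l ∈ ℬ not all equal, one has |φ((ξ_1 + ⋯ + ξ_l)/m)| < |φ(ξ_1)|^{1/m} ⋯ |φ(ξ_l)|^{1/m}. -/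
open Filter Topology

noncomputable section

/-- The set `ℬ = ⋃_{j=0}^n {ζ_j (1+it) : t ∈ [-η, η]}` where
`ζ_j = x₀ (1+ε) e^{2πij/(n+1)}`. -/
def Bset (n : ℕ) (x₀ η ε : ℝ) : Set ℂ :=
  {w : ℂ | ∃ j : ℕ, j ≤ n ∧ ∃ t : ℝ, |t| ≤ η ∧
    w = (x₀ * (1 + ε) : ℝ) * Complex.exp (2 * Real.pi * Complex.I * j / (n + 1)) *
      (1 + t * Complex.I)}

lemma cos_bound' (n : ℕ) {x : ℝ} (h1 : 1 ≤ x) (h2 : x ≤ n) :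
    Real.cos (2 * Real.pi * x / (n + 1)) ≤ Real.cos (2 * Real.pi / (n + 1)) := by
  have hπ := Real.pi_pos
  have hn1 : (0:ℝ) < n + 1 := by positivity
  set θ₀ := 2 * Real.pi / (n + 1) with hθ₀
  set θ := 2 * Real.pi * x / (n + 1) with hθ
  have hθ₀pos : 0 < θ₀ := by positivity
  have hθ₀θ : θ₀ ≤ θ := by
    rw [hθ₀, hθ]
    apply div_le_div_of_nonneg_right ?_ hn1.le
    nlinarith
  have hθle : θ ≤ 2 * Real.pi - θ₀ := by
    have heq : 2 * Real.pi - θ₀ = 2 * Real.pi * n / (n + 1) := by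
      rw [hθ₀]; field_simp; ring
    rw [heq, hθ]
    apply div_le_div_of_nonneg_right ?_ hn1.le
    nlinarith
  rcases le_or_gt θ Real.pi with h | h
  · exact Real.cos_le_cos_of_nonneg_of_le_pi (le_of_lt hθ₀pos) h hθ₀θ
  · have heq : Real.cos θ = Real.cos (2 * Real.pi - θ) := by
      rw [Real.cos_two_pi_sub]
    rw [heq]
    exact Real.cos_le_cos_of_nonneg_of_le_pi (le_of_lt hθ₀pos) (by linarith) (by linarith)

lemma abs_exp_unit (n j : ℕ) :
    ‖Complex.exp (2 * Real.pi * Complex.I * j / (n + 1))‖ = 1 := by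
  have : (2 * (Real.pi:ℂ) * Complex.I * j / (n + 1)) =
      ((2 * Real.pi * j / (n + 1) : ℝ) : ℂ) * Complex.I := by
    push_cast; ring
  rw [this, Complex.norm_exp_ofReal_mul_I]

lemma abs_one_add_mul_I (t : ℝ) :
    ‖1 + (t:ℂ) * Complex.I‖ = Real.sqrt (1 + t ^ 2) := by
  rw [show (1 + (t:ℂ) * Complex.I) = ((1:ℝ):ℂ) + (t:ℝ) * Complex.I by push_cast; ring,
    Complex.norm_def, Complex.normSq_add_mul_I]
  norm_num

lemma abs_elt (x₀ ε : ℝ) (hx₀ : 0 < x₀) (hε : 0 ≤ ε) (n j : ℕ) (t : ℝ) :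
    ‖(↑(x₀ * (1 + ε)) : ℂ) * Complex.exp (2 * Real.pi * Complex.I * j / (n + 1)) *
      (1 + (t:ℂ) * Complex.I)‖ = x₀ * (1 + ε) * Real.sqrt (1 + t ^ 2) := by
  rw [norm_mul, norm_mul, abs_exp_unit, abs_one_add_mul_I, Complex.norm_real, Real.norm_eq_abs,
    abs_of_nonneg (by positivity)]
  ring

lemma sqrt_one_add_sq_le {t η : ℝ} (hη : 0 ≤ η) (ht : |t| ≤ η) :
    Real.sqrt (1 + t ^ 2) ≤ 1 + η := by
  rw [show (1+η) = Real.sqrt ((1+η)^2) by rw [Real.sqrt_sq (by linarith)]]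
  apply Real.sqrt_le_sqrt
  have := abs_le.mp ht
  nlinarith

lemma one_le_sqrt_one_add_sq (t : ℝ) : 1 ≤ Real.sqrt (1 + t ^ 2) := by
  have h := Real.sqrt_le_sqrt (show (1:ℝ) ≤ 1 + t ^ 2 by nlinarith)
  simpa using h

lemma strictConvex_log_one_add_sq :
    StrictConvexOn ℝ (Set.Icc (-1:ℝ) 1) (fun t => Real.log (1 + t ^ 2)) := by
  have hd1 : ∀ t : ℝ, HasDerivAt (fun t => Real.log (1 + t ^ 2)) (2 * t / (1 + t ^ 2)) t := by
    intro t
    have h0 : (1 + t ^ 2) ≠ 0 := by positivity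
    have h := (Real.hasDerivAt_log h0).comp t (((hasDerivAt_pow 2 t).const_add 1))
    refine h.congr_deriv ?_
    push_cast [pow_one]
    ring
  have hderiv : deriv (fun t => Real.log (1 + t ^ 2)) = fun t => 2 * t / (1 + t ^ 2) := by
    funext t; exact (hd1 t).deriv
  apply strictConvexOn_of_deriv2_pos (convex_Icc _ _)
  · exact Continuous.continuousOn (by fun_prop (disch := intro t; positivity))
  · intro t ht
    rw [interior_Icc, Set.mem_Ioo] at ht
    have h0 : (1 + t ^ 2) ≠ 0 := by positivity
    have hd2 : HasDerivAt (fun t : ℝ => 2 * t / (1 + t ^ 2))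
        ((2 * (1 + t ^ 2) - 2 * t * (2 * t)) / (1 + t ^ 2) ^ 2) t := by
      have ha : HasDerivAt (fun t : ℝ => 2 * t) 2 t := by
        simpa using (hasDerivAt_id t).const_mul 2
      have hb : HasDerivAt (fun t : ℝ => 1 + t ^ 2) (2 * t) t := by
        simpa using (hasDerivAt_pow 2 t).const_add 1
      exact ha.div hb h0
    have heq : deriv (deriv (fun t => Real.log (1 + t ^ 2))) t
        = (2 * (1 + t ^ 2) - 2 * t * (2 * t)) / (1 + t ^ 2) ^ 2 := by
      rw [hderiv]; exact hd2.deriv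
    simp only [Function.iterate_succ, Function.iterate_zero, Function.comp_apply, id_eq]
    rw [heq]
    have h1 : t ^ 2 < 1 := by nlinarith
    apply div_pos (by nlinarith) (by positivity)

lemma jensen_prod {m : ℕ} (hm : 1 ≤ m) (t : Fin m → ℝ) (ht : ∀ i, |t i| ≤ 1)
    (hne : ∃ i i', t i ≠ t i') :
    1 + ((∑ i, t i) / m) ^ 2 < ∏ i, (1 + t i ^ 2) ^ ((1:ℝ) / m) := by
  have hm0 : (0:ℝ) < m := by exact_mod_cast hm
  obtain ⟨a, b, hab⟩ := hne
  have key := strictConvex_log_one_add_sq.map_sum_lt (t := Finset.univ)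
    (w := fun _ : Fin m => 1 / (m:ℝ)) (p := t)
    (fun i _ => by positivity)
    (by simp [Finset.sum_const, Finset.card_univ]; field_simp)
    (fun i _ => by
      rw [Set.mem_Icc]
      constructor <;> [linarith [abs_le.mp (ht i) |>.1]; linarith [abs_le.mp (ht i) |>.2]])
    ⟨a, Finset.mem_univ a, b, Finset.mem_univ b, hab⟩
  simp only [smul_eq_mul] at key
  have hsum : ∑ i, (1 / (m:ℝ)) * t i = (∑ i, t i) / m := by
    rw [← Finset.mul_sum]; ring
  rw [hsum] at key
  have h1 : (0:ℝ) < 1 + ((∑ i, t i) / m) ^ 2 := by positivity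
  calc 1 + ((∑ i, t i) / m) ^ 2
      = Real.exp (Real.log (1 + ((∑ i, t i) / m) ^ 2)) := (Real.exp_log h1).symm
    _ < Real.exp (∑ i, (1 / (m:ℝ)) * Real.log (1 + t i ^ 2)) := Real.exp_lt_exp.mpr key
    _ = ∏ i, Real.exp ((1 / (m:ℝ)) * Real.log (1 + t i ^ 2)) := Real.exp_sum _ _
    _ = ∏ i, (1 + t i ^ 2) ^ ((1:ℝ) / m) := by
        apply Finset.prod_congr rfl
        intro i _
        rw [Real.rpow_def_of_pos (by positivity), mul_comm]

lemma re_bound_arith {ca sa c₁ Ta Tb η : ℝ} (h1 : ca ≤ c₁) (h3 : |sa| ≤ 1)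
    (h4 : |Ta| ≤ η) (h5 : |Tb| ≤ η) (h6 : η ≤ 1) (h7 : -1 ≤ c₁) (h8 : c₁ ≤ 1) :
    ca * (1 + Ta * Tb) - sa * (Ta - Tb) ≤ c₁ + η ^ 2 + 2 * η := by
  have hη0 : 0 ≤ η := (abs_nonneg Ta).trans h4
  have hTT : |Ta * Tb| ≤ η ^ 2 := by
    rw [abs_mul]
    calc |Ta| * |Tb| ≤ η * η := mul_le_mul h4 h5 (abs_nonneg _) hη0
      _ = η ^ 2 := (sq η).symm
  have hc₁abs : |c₁| ≤ 1 := abs_le.mpr ⟨h7, h8⟩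
  have hTTc : |c₁ * (Ta * Tb)| ≤ η ^ 2 := by
    rw [abs_mul]
    calc |c₁| * |Ta * Tb| ≤ 1 * (η ^ 2) := mul_le_mul hc₁abs hTT (abs_nonneg _) zero_le_one
      _ = η ^ 2 := one_mul _
  have h9 : 0 ≤ 1 + Ta * Tb := by
    have := abs_le.mp hTT
    nlinarith
  have h10 : ca * (1 + Ta * Tb) ≤ c₁ * (1 + Ta * Tb) := mul_le_mul_of_nonneg_right h1 h9
  have h12 : c₁ * (Ta * Tb) ≤ η ^ 2 := (le_abs_self _).trans hTTc
  have h13 : |Ta - Tb| ≤ 2 * η := by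
    have ha := abs_le.mp h4
    have hb := abs_le.mp h5
    rw [abs_le]
    constructor <;> linarith
  have h14 : -(sa * (Ta - Tb)) ≤ 2 * η := by
    calc -(sa * (Ta - Tb)) ≤ |sa * (Ta - Tb)| := neg_le_abs _
      _ = |sa| * |Ta - Tb| := abs_mul _ _
      _ ≤ 1 * (2 * η) := mul_le_mul h3 h13 (abs_nonneg _) zero_le_one
      _ = 2 * η := one_mul _
  nlinarith

lemma select_eta (n m : ℕ) (hm : 1 ≤ m) (x₀ : ℝ) (hx₀ : 0 < x₀) :
    ∃ η : ℝ, 0 < η ∧ η < 1 ∧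
      ((m:ℝ) * η + ((m:ℝ) - 1) / m * (x₀ * (1 + η) ^ 2) < x₀) ∧
      (((m:ℝ) - 1) / m * (1 + η) ^ 2 < 1) ∧
      (1 ≤ n → Real.sqrt (2 + 2 * Real.cos (2 * Real.pi / (n + 1)) + 4 * η ^ 2 + 8 * η)
        + ((m:ℝ) - 2) * (1 + η) < m) := by
  have hm0 : (0:ℝ) < m := by exact_mod_cast hm
  have hmm : ((m:ℝ) - 1) / m < 1 := by
    rw [div_lt_one hm0]; linarith
  set c₁ := Real.cos (2 * Real.pi / (n + 1)) with hc₁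
  have h1 : ∀ᶠ η in 𝓝[>] (0:ℝ),
      (m:ℝ) * η + ((m:ℝ) - 1) / m * (x₀ * (1 + η) ^ 2) < x₀ := by
    apply Filter.Tendsto.eventually_lt_const (v := ((m:ℝ) - 1) / m * x₀)
    · nlinarith
    · have : Filter.Tendsto (fun η : ℝ => (m:ℝ) * η + ((m:ℝ) - 1) / m * (x₀ * (1 + η) ^ 2))
          (𝓝 0) (𝓝 ((m:ℝ) * 0 + ((m:ℝ) - 1) / m * (x₀ * (1 + 0) ^ 2))) := by
        apply Continuous.tendsto; fun_prop
      simpa using this.mono_left nhdsWithin_le_nhds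
  have h2 : ∀ᶠ η in 𝓝[>] (0:ℝ), ((m:ℝ) - 1) / m * (1 + η) ^ 2 < 1 := by
    apply Filter.Tendsto.eventually_lt_const (v := ((m:ℝ) - 1) / m) hmm
    have : Filter.Tendsto (fun η : ℝ => ((m:ℝ) - 1) / m * (1 + η) ^ 2)
        (𝓝 0) (𝓝 (((m:ℝ) - 1) / m * (1 + 0) ^ 2)) := by
      apply Continuous.tendsto; fun_prop
    simpa using this.mono_left nhdsWithin_le_nhds
  have h3 : ∀ᶠ η in 𝓝[>] (0:ℝ), 1 ≤ n →
      Real.sqrt (2 + 2 * c₁ + 4 * η ^ 2 + 8 * η) + ((m:ℝ) - 2) * (1 + η) < m := by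
    rcases Nat.lt_or_ge n 1 with hn | hn
    · filter_upwards with η h; omega
    · have hπ := Real.pi_pos
      have hc1 : c₁ < 1 := by
        rcases lt_or_eq_of_le (Real.cos_le_one (2 * Real.pi / (n + 1))) with h | h
        · exact h
        · exfalso
          have hn1 : (1:ℝ) ≤ n := by exact_mod_cast hn
          have hpos : 0 < 2 * Real.pi / (n + 1) := by positivity
          have hlt : 2 * Real.pi / (n + 1) < 2 * Real.pi := by
            rw [div_lt_iff₀ (by positivity)]; nlinarith
          have := (Real.cos_eq_one_iff_of_lt_of_lt (by linarith) hlt).mp h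
          linarith
      apply Filter.Eventually.mono ?_ (fun η h _ => h)
      apply Filter.Tendsto.eventually_lt_const
        (v := Real.sqrt (2 + 2 * c₁) + ((m:ℝ) - 2) * 1)
      · have : Real.sqrt (2 + 2 * c₁) < 2 := by
          rw [Real.sqrt_lt' (by norm_num)]; nlinarith
        linarith
      · have : Filter.Tendsto
            (fun η : ℝ => Real.sqrt (2 + 2 * c₁ + 4 * η ^ 2 + 8 * η) + ((m:ℝ) - 2) * (1 + η))
            (𝓝 0) (𝓝 (Real.sqrt (2 + 2 * c₁ + 4 * 0 ^ 2 + 8 * 0) + ((m:ℝ) - 2) * (1 + 0))) := by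
          apply Continuous.tendsto; fun_prop
        simpa using this.mono_left nhdsWithin_le_nhds
  have h4 : ∀ᶠ η in 𝓝[>] (0:ℝ), η < 1 := by
    apply Filter.Tendsto.eventually_lt_const (by norm_num : (0:ℝ) < 1)
    exact tendsto_id.mono_left nhdsWithin_le_nhds
  have h5 : ∀ᶠ η in 𝓝[>] (0:ℝ), 0 < η := eventually_mem_nhdsWithin
  obtain ⟨η, hη5, hη4, hη1, hη2, hη3⟩ := (h5.and (h4.and (h1.and (h2.and h3)))).exists
  exact ⟨η, hη5, hη4, hη1, hη2, hη3⟩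

-- STATEMENT 15
theorem stmt15 (n m : ℕ) (hm : 1 ≤ m) (x₀ : ℝ) (hx₀ : 0 < x₀) :
    ∃ η > (0 : ℝ), ∃ ε > (0 : ℝ),
      (∀ j : ℕ, 1 ≤ j → j ≤ m → ∀ d : ℕ, d ≤ j → d ≠ m →
        ∀ ξ' : Fin (j - d) → ℂ, (∀ i, ξ' i ∈ Metric.ball (0 : ℂ) η) →
          ∀ ξ : Fin d → ℂ, (∀ i, ξ i ∈ Bset n x₀ η ε) →
            ‖((∑ i, ξ' i + (∑ i, ξ i) / m) / (x₀ : ℂ)) ^ (n + 1)‖ < 1) ∧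
      (∀ l : ℕ, 1 ≤ l → l ≤ m → ∀ ξ : Fin l → ℂ, (∀ i, ξ i ∈ Bset n x₀ η ε) →
        (∃ i i', ξ i ≠ ξ i') →
          ‖((∑ i, ξ i) / m / (x₀ : ℂ)) ^ (n + 1)‖ <
            ∏ i, ‖(ξ i / (x₀ : ℂ)) ^ (n + 1)‖ ^ ((1 : ℝ) / m)) := by
  obtain ⟨η, hη0, hη1, C1, C2, C3⟩ := select_eta n m hm x₀ hx₀
  have hm0 : (0:ℝ) < m := by exact_mod_cast hm
  have hmC : ((m:ℕ) : ℂ) ≠ 0 := by exact_mod_cast hm0.ne'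
  set R := x₀ * (1 + η) with hR
  have hRpos : 0 < R := by rw [hR]; positivity
  -- upper bound for elements of Bset
  have habsB : ∀ w ∈ Bset n x₀ η η, R ≤ ‖w‖ ∧ ‖w‖ ≤ R * (1 + η) := by
    intro w hw
    obtain ⟨j, hj, t, ht, rfl⟩ := hw
    rw [abs_elt x₀ η hx₀ hη0.le n j t]
    constructor
    · rw [hR]
      nlinarith [one_le_sqrt_one_add_sq t, Real.sqrt_nonneg (1 + t^2)]
    · rw [hR]
      nlinarith [sqrt_one_add_sq_le hη0.le ht, Real.sqrt_nonneg (1 + t^2)]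
  refine ⟨η, hη0, η, hη0, ?_, ?_⟩
  · -- Part 1
    intro j hj1 hjm d hdj hdm ξ' hξ' ξ hξ
    have key : ‖∑ i, ξ' i + (∑ i, ξ i) / m‖ < x₀ := by
      have hb1 : ‖∑ i, ξ' i‖ ≤ (m:ℝ) * η := by
        calc ‖∑ i, ξ' i‖ ≤ ∑ i, ‖ξ' i‖ := norm_sum_le _ _
          _ ≤ ∑ _i : Fin (j - d), η := by
              apply Finset.sum_le_sum
              intro i _
              have := mem_ball_zero_iff.mp (hξ' i)
              exact this.le
          _ = ((j - d : ℕ) : ℝ) * η := by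
              rw [Finset.sum_const, Finset.card_univ, Fintype.card_fin, nsmul_eq_mul]
          _ ≤ (m:ℝ) * η := by
              apply mul_le_mul_of_nonneg_right _ hη0.le
              have : (j - d : ℕ) ≤ m := by omega
              exact_mod_cast this
      have hb2 : ‖∑ i, ξ i‖ ≤ (d:ℝ) * (R * (1 + η)) := by
        calc ‖∑ i, ξ i‖ ≤ ∑ i, ‖ξ i‖ := norm_sum_le _ _
          _ ≤ ∑ _i : Fin d, R * (1 + η) := by
              apply Finset.sum_le_sum
              intro i _
              exact (habsB _ (hξ i)).2
          _ = (d:ℝ) * (R * (1 + η)) := by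
              rw [Finset.sum_const, Finset.card_univ, Fintype.card_fin, nsmul_eq_mul]
      have hd' : (d:ℝ) ≤ (m:ℝ) - 1 := by
        have : d + 1 ≤ m := by omega
        have : ((d:ℝ) + 1) ≤ m := by exact_mod_cast this
        linarith
      calc ‖∑ i, ξ' i + (∑ i, ξ i) / m‖
          ≤ ‖∑ i, ξ' i‖ + ‖(∑ i, ξ i) / m‖ :=
            norm_add_le _ _
        _ = ‖∑ i, ξ' i‖ + ‖∑ i, ξ i‖ / m := by
            rw [norm_div, Complex.norm_natCast]
        _ ≤ (m:ℝ) * η + (d:ℝ) * (R * (1 + η)) / m := by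
            gcongr
        _ ≤ (m:ℝ) * η + ((m:ℝ) - 1) * (R * (1 + η)) / m := by
            have hRη : (0:ℝ) ≤ R * (1 + η) := by positivity
            gcongr
        _ = (m:ℝ) * η + ((m:ℝ) - 1) / m * (x₀ * (1 + η) ^ 2) := by
            rw [hR]; ring
        _ < x₀ := C1
    rw [norm_pow, norm_div, Complex.norm_real, Real.norm_eq_abs, abs_of_pos hx₀]
    apply pow_lt_one₀ (by positivity) _ (Nat.succ_ne_zero n)
    rw [div_lt_one hx₀]
    exact key
  · -- Part 2
    intro l hl1 hlm ξ hξ hne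
    simp only [Bset, Set.mem_setOf_eq] at hξ
    choose J hJ T hT hw using hξ
    have habs : ∀ i, ‖ξ i‖ = R * Real.sqrt (1 + T i ^ 2) := by
      intro i
      rw [hw i, abs_elt x₀ η hx₀ hη0.le n (J i) (T i), hR]
    have habs_lb : ∀ i, R ≤ ‖ξ i‖ := by
      intro i
      rw [habs i]
      nlinarith [one_le_sqrt_one_add_sq (T i)]
    have habs_ub : ∀ i, ‖ξ i‖ ≤ R * (1 + η) := by
      intro i
      rw [habs i]
      nlinarith [sqrt_one_add_sq_le hη0.le (hT i), Real.sqrt_nonneg (1 + T i ^ 2)]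
    -- rewrite RHS
    have hRHS : ∏ i, ‖(ξ i / (x₀:ℂ)) ^ (n + 1)‖ ^ ((1:ℝ) / m)
        = (∏ i, ‖ξ i / (x₀:ℂ)‖ ^ ((1:ℝ) / m)) ^ (n + 1) := by
      rw [← Finset.prod_pow]
      apply Finset.prod_congr rfl
      intro i _
      rw [norm_pow, ← Real.rpow_natCast (‖ξ i / (x₀:ℂ)‖) (n + 1),
        ← Real.rpow_mul (norm_nonneg _), mul_comm,
        Real.rpow_mul (norm_nonneg _), Real.rpow_natCast]
    rw [hRHS, norm_pow]
    apply pow_lt_pow_left₀ _ (norm_nonneg _) (Nat.succ_ne_zero n)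
    -- core goal
    have hb : ∀ i, ‖ξ i / (x₀:ℂ)‖ = ‖ξ i‖ / x₀ := by
      intro i
      rw [norm_div, Complex.norm_real, Real.norm_eq_abs, abs_of_pos hx₀]
    have hb_lb : ∀ i, 1 + η ≤ ‖ξ i / (x₀:ℂ)‖ := by
      intro i
      rw [hb i, le_div_iff₀ hx₀]
      have := habs_lb i
      rw [hR] at this
      linarith
    have hLHS : ‖(∑ i, ξ i) / m / (x₀:ℂ)‖
        = ‖∑ i, ξ i‖ / m / x₀ := by
      rw [norm_div, norm_div, Complex.norm_natCast, Complex.norm_real, Real.norm_eq_abs, abs_of_pos hx₀]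
    rcases Nat.lt_or_ge l m with hlt | hge
    · -- case l < m
      have hsum_ub : ‖∑ i, ξ i‖ ≤ (l:ℝ) * (R * (1 + η)) := by
        calc ‖∑ i, ξ i‖ ≤ ∑ i, ‖ξ i‖ := norm_sum_le _ _
          _ ≤ ∑ _i : Fin l, R * (1 + η) := Finset.sum_le_sum (fun i _ => habs_ub i)
          _ = (l:ℝ) * (R * (1 + η)) := by
              rw [Finset.sum_const, Finset.card_univ, Fintype.card_fin, nsmul_eq_mul]
      have hLHS1 : ‖(∑ i, ξ i) / m / (x₀:ℂ)‖ < 1 := by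
        rw [hLHS]
        have hl' : (l:ℝ) ≤ (m:ℝ) - 1 := by
          have : (l:ℝ) + 1 ≤ m := by exact_mod_cast hlt
          linarith
        calc ‖∑ i, ξ i‖ / m / x₀ ≤ (l:ℝ) * (R * (1 + η)) / m / x₀ := by gcongr
          _ ≤ ((m:ℝ) - 1) * (R * (1 + η)) / m / x₀ := by
              have hRη : (0:ℝ) ≤ R * (1 + η) := by positivity
              gcongr
          _ = ((m:ℝ) - 1) / m * (1 + η) ^ 2 := by
              rw [hR]; field_simp
          _ < 1 := C2
      have hRHS1 : (1:ℝ) ≤ ∏ i, ‖ξ i / (x₀:ℂ)‖ ^ ((1:ℝ) / m) := by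
        calc (1:ℝ) = ∏ _i : Fin l, (1:ℝ) := by simp
          _ ≤ ∏ i, ‖ξ i / (x₀:ℂ)‖ ^ ((1:ℝ) / m) :=
              Finset.prod_le_prod (fun i _ => zero_le_one)
                (fun i _ => Real.one_le_rpow (by linarith [hb_lb i]) (by positivity))
      linarith
    · -- case l = m
      have hlm' : l = m := le_antisymm hlm hge
      subst hlm'
      by_cases hJc : ∀ i i', J i = J i'
      · -- all directions equal: Jensen
        have i₀ : Fin l := ⟨0, by omega⟩
        have hTne : ∃ i i', T i ≠ T i' := by
          obtain ⟨i, i', hii⟩ := hne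
          refine ⟨i, i', fun h => hii ?_⟩
          rw [hw i, hw i', h, hJc i i₀, hJc i' i₀]
        set S := ∑ i, T i with hS
        have hsum : ∑ i, ξ i = (↑(x₀ * (1 + η)) : ℂ) *
            Complex.exp (2 * Real.pi * Complex.I * (J i₀) / (n + 1)) *
            ((l:ℂ) + (S:ℂ) * Complex.I) := by
          rw [Finset.sum_congr rfl (fun i _ => by rw [hw i, hJc i i₀])]
          rw [← Finset.mul_sum]
          congr 1
          rw [Finset.sum_add_distrib, Finset.sum_const, Finset.card_univ, Fintype.card_fin]
          push_cast [hS]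
          rw [Finset.sum_mul]
          simp
        have habs_sum : ‖∑ i, ξ i‖ = R * Real.sqrt ((l:ℝ)^2 + S^2) := by
          rw [hsum, norm_mul, norm_mul, abs_exp_unit, Complex.norm_real, Real.norm_eq_abs,
            abs_of_nonneg (by positivity),
            show ((l:ℂ) + (S:ℂ) * Complex.I) = ((l:ℝ):ℂ) + (S:ℝ) * Complex.I by push_cast; ring,
            Complex.norm_def, Complex.normSq_add_mul_I, hR]
          ring
        have hjensen : 1 + (S / l) ^ 2 < ∏ i, (1 + T i ^ 2) ^ ((1:ℝ) / l) := by
          rw [hS]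
          exact jensen_prod hl1 T (fun i => (hT i).trans hη1.le) hTne
        have hbval : ∀ i, ‖ξ i / (x₀:ℂ)‖ = (1 + η) * Real.sqrt (1 + T i ^ 2) := by
          intro i
          rw [hb i, habs i, hR]
          field_simp
        have hprodpos : 0 < ∏ i, ‖ξ i / (x₀:ℂ)‖ ^ ((1:ℝ) / l) := by
          apply Finset.prod_pos
          intro i _
          apply Real.rpow_pos_of_pos
          rw [hbval i]
          have := one_le_sqrt_one_add_sq (T i)
          nlinarith
        have hl0 : (0:ℝ) < l := by exact_mod_cast hl1
        rw [hLHS, habs_sum]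
        have hLHSval : R * Real.sqrt ((l:ℝ)^2 + S^2) / l / x₀
            = (1 + η) * Real.sqrt ((l:ℝ)^2 + S^2) / l := by
          rw [hR]; field_simp
        rw [hLHSval]
        apply lt_of_pow_lt_pow_left₀ 2 hprodpos.le
        have hRHSsq : (∏ i, ‖ξ i / (x₀:ℂ)‖ ^ ((1:ℝ) / l)) ^ 2
            = (1 + η)^2 * ∏ i, (1 + T i ^ 2) ^ ((1:ℝ) / l) := by
          rw [← Finset.prod_pow]
          have hterm : ∀ i : Fin l, (‖ξ i / (x₀:ℂ)‖ ^ ((1:ℝ) / l)) ^ 2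
              = ((1 + η)^2) ^ ((1:ℝ) / l) * (1 + T i ^ 2) ^ ((1:ℝ) / l) := by
            intro i
            rw [← Real.rpow_natCast (‖ξ i / (x₀:ℂ)‖ ^ ((1:ℝ)/l)) 2,
              ← Real.rpow_mul (norm_nonneg _), mul_comm ((1:ℝ)/l),
              Real.rpow_mul (norm_nonneg _), Real.rpow_natCast,
              hbval i, mul_pow, Real.sq_sqrt (by positivity),
              ← Real.mul_rpow (by positivity) (by positivity)]
          rw [Finset.prod_congr rfl (fun i _ => hterm i), Finset.prod_mul_distrib,
            Finset.prod_const, Finset.card_univ, Fintype.card_fin,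
            ← Real.rpow_natCast (((1+η)^2) ^ ((1:ℝ)/l)) l, ← Real.rpow_mul (by positivity)]
          rw [show (1:ℝ)/l * l = 1 by field_simp, Real.rpow_one]
        rw [hRHSsq]
        have hLsq : ((1 + η) * Real.sqrt ((l:ℝ)^2 + S^2) / l) ^ 2
            = (1 + η)^2 * (1 + (S / l)^2) := by
          rw [div_pow, mul_pow, Real.sq_sqrt (by positivity)]
          field_simp
        rw [hLsq]
        exact mul_lt_mul_of_pos_left hjensen (by positivity)
      · -- not all directions equal
        push_neg at hJc
        obtain ⟨a, b, hJab⟩ := hJc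
        have hab : a ≠ b := fun h => hJab (by rw [h])
        have hm2 : 2 ≤ l := by
          by_contra h
          push_neg at h
          have ha := a.isLt
          have hb' := b.isLt
          have : a.val = b.val := by omega
          exact hab (Fin.ext this)
        have hn1 : 1 ≤ n := by
          by_contra h
          push_neg at h
          have h1 := hJ a
          have h2 := hJ b
          omega
        set c₁ := Real.cos (2 * Real.pi / (n + 1)) with hc₁
        -- the re bound
        have hre : (ξ a * (starRingEnd ℂ) (ξ b)).re ≤ R^2 * (c₁ + η^2 + 2*η) := by
          set α := 2 * Real.pi * ((J a : ℝ) - (J b : ℝ)) / (n + 1) with hα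
          set p := 1 + T a * T b with hp
          set q := T a - T b with hq
          have hprod : ξ a * (starRingEnd ℂ) (ξ b)
              = ((R^2 : ℝ) : ℂ) * (Complex.exp ((α:ℝ) * Complex.I) * ((p:ℝ) + (q:ℝ) * Complex.I)) := by
            rw [hw a, hw b]
            have hee : Complex.exp (2 * Real.pi * Complex.I * (J a) / (n + 1)) *
                (starRingEnd ℂ) (Complex.exp (2 * Real.pi * Complex.I * (J b) / (n + 1)))
                = Complex.exp ((α:ℝ) * Complex.I) := by
              rw [← Complex.exp_conj, ← Complex.exp_add]
              congr 1
              have hc : (starRingEnd ℂ) (2 * (Real.pi:ℂ) * Complex.I * (J b) / (n + 1))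
                  = -(2 * (Real.pi:ℂ) * Complex.I * (J b) / (n + 1)) := by
                simp [map_div₀, Complex.conj_I, map_ofNat]
                ring
              rw [hc, hα]
              push_cast
              ring
            simp only [map_mul]
            rw [Complex.conj_ofReal]
            have hconj1 : (starRingEnd ℂ) (1 + (T b : ℂ) * Complex.I) = 1 - (T b : ℂ) * Complex.I := by
              simp [Complex.conj_I, Complex.conj_ofReal]
              ring
            rw [hconj1]
            rw [show ((x₀ * (1+η):ℝ):ℂ) * Complex.exp (2 * Real.pi * Complex.I * (J a) / (n + 1)) *
                (1 + (T a:ℂ) * Complex.I) *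
                (((x₀ * (1+η):ℝ):ℂ) * (starRingEnd ℂ) (Complex.exp (2 * Real.pi * Complex.I * (J b) / (n + 1))) *
                (1 - (T b:ℂ) * Complex.I))
                = (((x₀ * (1+η):ℝ):ℂ) * ((x₀ * (1+η):ℝ):ℂ)) *
                  (Complex.exp (2 * Real.pi * Complex.I * (J a) / (n + 1)) *
                    (starRingEnd ℂ) (Complex.exp (2 * Real.pi * Complex.I * (J b) / (n + 1)))) *
                  ((1 + (T a:ℂ) * Complex.I) * (1 - (T b:ℂ) * Complex.I)) by ring]
            rw [hee]
            have h2 : (1 + (T a:ℂ) * Complex.I) * (1 - (T b:ℂ) * Complex.I)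
                = ((p:ℝ):ℂ) + ((q:ℝ):ℂ) * Complex.I := by
              rw [hp, hq]
              push_cast
              linear_combination (-((T a:ℂ) * (T b:ℂ))) * Complex.I_sq
            rw [h2, hR]
            push_cast
            ring
          rw [hprod, Complex.re_ofReal_mul]
          have hzre : (Complex.exp ((α:ℝ) * Complex.I) * ((p:ℝ) + (q:ℝ) * Complex.I)).re
              = Real.cos α * p - Real.sin α * q := by
            simp [Complex.mul_re, Complex.exp_ofReal_mul_I_re, Complex.exp_ofReal_mul_I_im]
          rw [hzre]
          have hcosb : Real.cos α ≤ c₁ := by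
            have hcos_abs : Real.cos α = Real.cos (2 * Real.pi * |(J a : ℝ) - (J b : ℝ)| / (n + 1)) := by
              rcases abs_cases ((J a : ℝ) - (J b : ℝ)) with ⟨h, _⟩ | ⟨h, _⟩
              · rw [h]
              · rw [h, hα, show 2 * Real.pi * -((J a:ℝ) - (J b:ℝ)) / (n+1)
                  = -(2 * Real.pi * ((J a:ℝ) - (J b:ℝ)) / (n+1)) by ring, Real.cos_neg]
            rw [hcos_abs, hc₁]
            apply cos_bound' n
            · have hne' : (J a : ℤ) ≠ (J b : ℤ) := by exact_mod_cast hJab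
              have h1 : 1 ≤ |(J a : ℤ) - (J b : ℤ)| := Int.one_le_abs (sub_ne_zero.mpr hne')
              have : (1:ℝ) ≤ |((J a : ℤ) : ℝ) - ((J b : ℤ) : ℝ)| := by
                rw [← Int.cast_sub, ← Int.cast_abs]
                exact_mod_cast h1
              simpa using this
            · have h1 := hJ a
              have h2 := hJ b
              have : |(J a : ℤ) - (J b : ℤ)| ≤ n := by rw [abs_le]; omega
              have h3 : |((J a : ℤ) : ℝ) - ((J b : ℤ) : ℝ)| ≤ n := by
                rw [← Int.cast_sub, ← Int.cast_abs]
                exact_mod_cast this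
              simpa using h3
          have harith := re_bound_arith hcosb (Real.abs_sin_le_one α) (hT a) (hT b)
            hη1.le (Real.neg_one_le_cos _) (Real.cos_le_one _)
          rw [← hp, ← hq] at harith
          exact mul_le_mul_of_nonneg_left harith (sq_nonneg R)
        -- bound |ξa + ξb|
        have hab2 : ‖ξ a + ξ b‖ ≤ R * Real.sqrt (2 + 2*c₁ + 4*η^2 + 8*η) := by
          have hnsq : Complex.normSq (ξ a + ξ b) ≤ R^2 * (2 + 2*c₁ + 4*η^2 + 8*η) := by
            rw [Complex.normSq_add]
            have h1 : Complex.normSq (ξ a) ≤ (R * (1+η))^2 := by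
              rw [← Complex.sq_norm]
              exact pow_le_pow_left₀ (norm_nonneg _) (habs_ub a) 2
            have h2 : Complex.normSq (ξ b) ≤ (R * (1+η))^2 := by
              rw [← Complex.sq_norm]
              exact pow_le_pow_left₀ (norm_nonneg _) (habs_ub b) 2
            have hident : R^2*(2 + 2*c₁ + 4*η^2 + 8*η)
                = (R*(1+η))^2 + (R*(1+η))^2 + 2*(R^2*(c₁ + η^2 + 2*η)) := by ring
            linarith
          rw [Complex.norm_def]
          calc Real.sqrt (Complex.normSq (ξ a + ξ b))
              ≤ Real.sqrt (R^2 * (2 + 2*c₁ + 4*η^2 + 8*η)) := Real.sqrt_le_sqrt hnsq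
            _ = R * Real.sqrt (2 + 2*c₁ + 4*η^2 + 8*η) := by
                rw [Real.sqrt_mul (sq_nonneg R), Real.sqrt_sq hRpos.le]
        -- split sum
        have hsplit : ∑ i, ξ i = (ξ a + ξ b) + ∑ i ∈ Finset.univ \ {a, b}, ξ i := by
          rw [← Finset.sum_sdiff (Finset.subset_univ {a, b})]
          rw [Finset.sum_pair hab]
          ring
        have hcard : (Finset.univ \ {a, b} : Finset (Fin l)).card = l - 2 := by
          rw [Finset.card_sdiff_of_subset (Finset.subset_univ _), Finset.card_univ, Fintype.card_fin,
            Finset.card_pair hab]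
        have hkey : ‖∑ i, ξ i‖ < (l:ℝ) * R := by
          calc ‖∑ i, ξ i‖
              ≤ ‖ξ a + ξ b‖ + ‖∑ i ∈ Finset.univ \ {a, b}, ξ i‖ := by
                rw [hsplit]; exact norm_add_le _ _
            _ ≤ R * Real.sqrt (2 + 2*c₁ + 4*η^2 + 8*η)
                + ∑ i ∈ Finset.univ \ {a, b}, ‖ξ i‖ := by
                gcongr <;> first | exact hab2 | exact norm_sum_le _ _
            _ ≤ R * Real.sqrt (2 + 2*c₁ + 4*η^2 + 8*η) + ((l:ℝ) - 2) * (R * (1 + η)) := by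
                gcongr
                calc ∑ i ∈ Finset.univ \ {a, b}, ‖ξ i‖
                    ≤ ∑ _i ∈ Finset.univ \ {a, b}, R * (1 + η) :=
                      Finset.sum_le_sum (fun i _ => habs_ub i)
                  _ = ((l - 2 : ℕ) : ℝ) * (R * (1 + η)) := by
                      rw [Finset.sum_const, hcard, nsmul_eq_mul]
                  _ ≤ ((l:ℝ) - 2) * (R * (1 + η)) := by
                      have : ((l - 2 : ℕ) : ℝ) = (l:ℝ) - 2 := by
                        have : (2:ℕ) ≤ l := hm2
                        push_cast [Nat.cast_sub this]
                        ring
                      rw [this]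
            _ = R * (Real.sqrt (2 + 2*c₁ + 4*η^2 + 8*η) + ((l:ℝ) - 2) * (1 + η)) := by ring
            _ < R * l := by
                apply mul_lt_mul_of_pos_left _ hRpos
                exact C3 hn1
            _ = (l:ℝ) * R := by ring
        -- conclude
        have hLHS1 : ‖(∑ i, ξ i) / l / (x₀:ℂ)‖ < 1 + η := by
          rw [hLHS]
          rw [div_lt_iff₀ hx₀, div_lt_iff₀ hm0]
          calc ‖∑ i, ξ i‖ < (l:ℝ) * R := hkey
            _ = (1 + η) * x₀ * l := by rw [hR]; ring
        have hRHS1 : (1 + η : ℝ) ≤ ∏ i, ‖ξ i / (x₀:ℂ)‖ ^ ((1:ℝ) / l) := by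
          calc (1 + η : ℝ) = ((1 + η) ^ ((1:ℝ)/l)) ^ (l:ℕ) := by
                rw [← Real.rpow_natCast ((1+η) ^ ((1:ℝ)/l)) l, ← Real.rpow_mul (by linarith)]
                rw [show (1:ℝ)/l * l = 1 by field_simp, Real.rpow_one]
            _ = ∏ _i : Fin l, (1 + η) ^ ((1:ℝ)/l) := by
                rw [Finset.prod_const, Finset.card_univ, Fintype.card_fin]
            _ ≤ ∏ i, ‖ξ i / (x₀:ℂ)‖ ^ ((1:ℝ) / l) := by
                apply Finset.prod_le_prod
                · intro i _; positivity
                · intro i _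
                  exact Real.rpow_le_rpow (by linarith) (hb_lb i) (by positivity)
        exact lt_of_lt_of_le hLHS1 hRHS1

end
end
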